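/- arXiv:2401.10818 — 5 statements merged into one kernel-verified Lean document; each statement's English description precedes it below -/
import Mathlib

section
/- Let α ∈ (−1,0), λ > 0, and let n ≥ 1 be an integer such that (λn)^{−1/α} ≤ n/2 and (λn/4)^{−1/α} ≥ 2. Consider the clique infection chain on {0,…,n} started at X₀ = 1, and set m = ⌊(λn/4)^{−1/α}⌋. Then the expected survival time satisfies E[T] ≥ (2^m − 1)/2. -/
open scoped ENNReal
open Filter Asymptotics
open Topology

noncomputable def markovDist {S : Type*} [DecidableEq S] (step : S → S → ℝ≥0∞) (s0 : S) :
    ℕ → S → ℝ≥0∞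
  | 0 => fun J => if J = s0 then 1 else 0
  | t + 1 => fun J => ∑' s : S, markovDist step s0 t s * step s J

open Classical in
noncomputable def absorbStep {S : Type*} (A : Set S) (step : S → S → ℝ≥0∞) :
    S → S → ℝ≥0∞ :=
  fun s => if s ∈ A then (fun J => if J = s then 1 else 0) else step s

noncomputable def hitProb {S : Type*} [DecidableEq S] (step : S → S → ℝ≥0∞) (s0 : S)
    (A : Set S) : ℝ≥0∞ :=
  ⨆ t : ℕ, ∑' s : S, A.indicator (markovDist (absorbStep A step) s0 t) s

noncomputable def cliqueStep (n : ℕ) (lam alpha : ℝ) (I : ℕ) : ℕ → ℝ≥0∞ :=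
  if I = 0 ∨ n < I then fun J => if J = I then 1 else 0
  else fun J =>
    if J = I + 1 then
      ENNReal.ofReal (lam * (I : ℝ) ^ (1 + alpha) * ((n : ℝ) - I) /
        (lam * (I : ℝ) ^ (1 + alpha) * ((n : ℝ) - I) + I))
    else if J = I - 1 then
      ENNReal.ofReal ((I : ℝ) /
        (lam * (I : ℝ) ^ (1 + alpha) * ((n : ℝ) - I) + I))
    else 0

noncomputable def cliqueDist (n : ℕ) (lam alpha : ℝ) (x0 : ℕ) : ℕ → ℕ → ℝ≥0∞ :=
  markovDist (cliqueStep n lam alpha) x0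

noncomputable def cliqueET (n : ℕ) (lam alpha : ℝ) (x0 : ℕ) : ℝ≥0∞ :=
  ∑' t : ℕ, (1 - cliqueDist n lam alpha x0 t 0)

/-! ### Auxiliary lemmas -/

lemma tsum_pair_support (g : ℕ → ℝ≥0∞) (a b : ℕ) (hab : a ≠ b)
    (h : ∀ j, j ≠ a → j ≠ b → g j = 0) : ∑' j, g j = g a + g b := by
  rw [tsum_eq_sum (s := {a, b}) (by intro j hj; simp only [Finset.mem_insert,
    Finset.mem_singleton, not_or] at hj; exact h j hj.1 hj.2)]
  rw [Finset.sum_pair hab]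

lemma cliqueStep_tsum_absorb (n : ℕ) (lam alpha : ℝ) (I : ℕ) (hI : I = 0 ∨ n < I)
    (f : ℕ → ℝ≥0∞) : ∑' J, cliqueStep n lam alpha I J * f J = f I := by
  unfold cliqueStep
  rw [if_pos hI, tsum_eq_single I (by intro j hj; simp [hj])]
  simp

lemma cliqueStep_tsum (n : ℕ) (lam alpha : ℝ) (I : ℕ) (hI0 : I ≠ 0) (hIn : I ≤ n)
    (f : ℕ → ℝ≥0∞) :
    ∑' J, cliqueStep n lam alpha I J * f J =
      ENNReal.ofReal (lam * (I : ℝ) ^ (1 + alpha) * ((n : ℝ) - I) /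
        (lam * (I : ℝ) ^ (1 + alpha) * ((n : ℝ) - I) + I)) * f (I + 1) +
      ENNReal.ofReal ((I : ℝ) /
        (lam * (I : ℝ) ^ (1 + alpha) * ((n : ℝ) - I) + I)) * f (I - 1) := by
  have hne : I - 1 ≠ I + 1 := by omega
  have hstep : cliqueStep n lam alpha I = fun J =>
      if J = I + 1 then
        ENNReal.ofReal (lam * (I : ℝ) ^ (1 + alpha) * ((n : ℝ) - I) /
          (lam * (I : ℝ) ^ (1 + alpha) * ((n : ℝ) - I) + I))
      else if J = I - 1 then
        ENNReal.ofReal ((I : ℝ) /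
          (lam * (I : ℝ) ^ (1 + alpha) * ((n : ℝ) - I) + I))
      else 0 := by
    unfold cliqueStep
    rw [if_neg (by push_neg; exact ⟨hI0, hIn⟩)]
  rw [tsum_pair_support _ (I + 1) (I - 1) hne.symm
    (by intro j hj1 hj2; simp [hstep, hj1, hj2])]
  simp [hstep, hne]

lemma cliqueStep_pq (n : ℕ) (lam alpha : ℝ) (hlam : 0 < lam) (I : ℕ) (hI0 : I ≠ 0)
    (hIn : I ≤ n) :
    ENNReal.ofReal (lam * (I : ℝ) ^ (1 + alpha) * ((n : ℝ) - I) /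
        (lam * (I : ℝ) ^ (1 + alpha) * ((n : ℝ) - I) + I)) +
      ENNReal.ofReal ((I : ℝ) /
        (lam * (I : ℝ) ^ (1 + alpha) * ((n : ℝ) - I) + I)) = 1 := by
  set b : ℝ := lam * (I : ℝ) ^ (1 + alpha) * ((n : ℝ) - I) with hbdef
  have hI1 : (1 : ℝ) ≤ I := by exact_mod_cast Nat.one_le_iff_ne_zero.mpr hI0
  have hb : 0 ≤ b := by
    apply mul_nonneg (mul_nonneg hlam.le (Real.rpow_nonneg (Nat.cast_nonneg I) _))
    have : (I : ℝ) ≤ n := by exact_mod_cast hIn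
    linarith
  have hD : 0 < b + I := by linarith
  rw [← ENNReal.ofReal_add (div_nonneg hb hD.le) (div_nonneg (by linarith) hD.le),
    ← add_div, div_self hD.ne', ENNReal.ofReal_one]

lemma cliqueStep_sum_le (n : ℕ) (lam alpha : ℝ) (hlam : 0 < lam) (I : ℕ) :
    ∑' J, cliqueStep n lam alpha I J ≤ 1 := by
  by_cases hI : I = 0 ∨ n < I
  · have := cliqueStep_tsum_absorb n lam alpha I hI (fun _ => 1)
    simp only [mul_one] at this
    rw [this]
  · push_neg at hI
    have := cliqueStep_tsum n lam alpha I hI.1 hI.2 (fun _ => 1)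
    simp only [mul_one] at this
    rw [this, cliqueStep_pq n lam alpha hlam I hI.1 hI.2]

lemma cliqueDist_mass_le (n : ℕ) (lam alpha : ℝ) (hlam : 0 < lam) (x0 : ℕ) (t : ℕ) :
    ∑' I, cliqueDist n lam alpha x0 t I ≤ 1 := by
  induction t with
  | zero =>
      unfold cliqueDist markovDist
      rw [tsum_eq_single x0 (by intro j hj; simp [hj])]
      simp
  | succ t ih =>
      have hexp : ∀ J, cliqueDist n lam alpha x0 (t + 1) J
          = ∑' s, cliqueDist n lam alpha x0 t s * cliqueStep n lam alpha s J := by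
        intro J; rfl
      calc ∑' J, cliqueDist n lam alpha x0 (t + 1) J
          = ∑' J, ∑' s, cliqueDist n lam alpha x0 t s * cliqueStep n lam alpha s J := by
            simp only [hexp]
        _ = ∑' s, ∑' J, cliqueDist n lam alpha x0 t s * cliqueStep n lam alpha s J :=
            ENNReal.tsum_comm
        _ = ∑' s, cliqueDist n lam alpha x0 t s * ∑' J, cliqueStep n lam alpha s J := by
            simp only [ENNReal.tsum_mul_left]
        _ ≤ ∑' s, cliqueDist n lam alpha x0 t s * 1 :=
            ENNReal.tsum_le_tsum fun s =>
              mul_le_mul_right (cliqueStep_sum_le n lam alpha hlam s) _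
        _ ≤ 1 := by simpa using ih

/-- Master lemma: any bounded subsolution of the expected-hitting-time equations
lower-bounds the expected survival time. -/
lemma subsolution_le_cliqueET (n : ℕ) (lam alpha : ℝ) (hlam : 0 < lam) (x0 : ℕ)
    (f : ℕ → ℝ≥0∞) (M : ℝ≥0∞) (hM : M ≠ ⊤) (hf0 : f 0 = 0) (hfM : ∀ I, f I ≤ M)
    (hdrift : ∀ I, I ≠ 0 → f I ≤ 1 + ∑' J, cliqueStep n lam alpha I J * f J) :
    f x0 ≤ cliqueET n lam alpha x0 := by
  set d := cliqueDist n lam alpha x0 with hd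
  set P : ℕ → ℝ≥0∞ := fun t => 1 - d t 0 with hP
  set g : ℕ → ℝ≥0∞ := fun t => ∑' I, d t I * f I with hg
  have hd0 : ∀ t, d t 0 = ∑' I, d t I * (if I = 0 then 1 else 0) := by
    intro t
    rw [tsum_eq_single 0 (by intro j hj; simp [hj])]
    simp
  have key1 : ∀ t, (∑' I, d t I * (if I = 0 then 0 else 1)) ≤ P t := by
    intro t
    have hne : d t 0 ≠ ⊤ := by
      refine ne_top_of_le_ne_top ENNReal.one_ne_top ?_
      exact le_trans (ENNReal.le_tsum 0) (cliqueDist_mass_le n lam alpha hlam x0 t)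
    apply ENNReal.le_sub_of_add_le_right hne
    rw [hd0 t, ← ENNReal.tsum_add]
    calc (∑' I, (d t I * (if I = 0 then 0 else 1) + d t I * (if I = 0 then 1 else 0)))
        = ∑' I, d t I := by
          congr 1; funext I
          by_cases hI : I = 0 <;> simp [hI]
      _ ≤ 1 := cliqueDist_mass_le n lam alpha hlam x0 t
  have key2 : ∀ t, g t ≤ P t + g (t + 1) := by
    intro t
    have hexp : g (t + 1) = ∑' I, d t I * ∑' J, cliqueStep n lam alpha I J * f J := by
      have h1 : ∀ J, d (t + 1) J = ∑' s, d t s * cliqueStep n lam alpha s J := fun J => rfl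
      calc g (t + 1) = ∑' J, (∑' s, d t s * cliqueStep n lam alpha s J) * f J := by
            simp only [hg, h1]
        _ = ∑' J, ∑' s, d t s * cliqueStep n lam alpha s J * f J := by
            simp only [ENNReal.tsum_mul_right]
        _ = ∑' s, ∑' J, d t s * cliqueStep n lam alpha s J * f J := ENNReal.tsum_comm
        _ = ∑' s, d t s * ∑' J, cliqueStep n lam alpha s J * f J := by
            simp only [mul_assoc, ENNReal.tsum_mul_left]
    calc g t = ∑' I, d t I * f I := rfl
      _ ≤ ∑' I, d t I * ((if I = 0 then 0 else 1) + ∑' J, cliqueStep n lam alpha I J * f J) := by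
          apply ENNReal.tsum_le_tsum
          intro I
          by_cases hI : I = 0
          · simp [hI, hf0]
          · apply mul_le_mul_right
            simpa [hI] using hdrift I hI
      _ = (∑' I, d t I * (if I = 0 then 0 else 1)) +
            ∑' I, d t I * ∑' J, cliqueStep n lam alpha I J * f J := by
          rw [← ENNReal.tsum_add]
          congr 1; funext I; rw [mul_add]
      _ ≤ P t + g (t + 1) := by
          rw [hexp]
          exact add_le_add_left (key1 t) _
  have key3 : ∀ N, f x0 ≤ (∑ t ∈ Finset.range N, P t) + g N := by
    intro N
    induction N with
    | zero =>
        have : g 0 = f x0 := by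
          simp only [hg, hd]
          unfold cliqueDist markovDist
          rw [tsum_eq_single x0 (by intro j hj; simp [hj])]
          simp
        simp [this.symm]
    | succ N ih =>
        calc f x0 ≤ (∑ t ∈ Finset.range N, P t) + g N := ih
          _ ≤ (∑ t ∈ Finset.range N, P t) + (P N + g (N + 1)) :=
              add_le_add_right (key2 N) _
          _ = (∑ t ∈ Finset.range (N + 1), P t) + g (N + 1) := by
              rw [Finset.sum_range_succ]; ring
  have key4 : ∀ N, g N ≤ M * P N := by
    intro N
    calc g N = ∑' I, d N I * f I := rfl
      _ ≤ ∑' I, d N I * (if I = 0 then 0 else 1) * M := by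
          apply ENNReal.tsum_le_tsum
          intro I
          by_cases hI : I = 0
          · simp [hI, hf0]
          · rw [if_neg hI, mul_one]
            exact mul_le_mul_right (hfM I) _
      _ = (∑' I, d N I * (if I = 0 then 0 else 1)) * M := ENNReal.tsum_mul_right
      _ ≤ P N * M := mul_le_mul_left (key1 N) M
      _ = M * P N := mul_comm _ _
  have hET : cliqueET n lam alpha x0 = ∑' t, P t := rfl
  rw [hET]
  by_cases htop : ∑' t, P t = ⊤
  · simp [htop]
  · have hP0 : Tendsto P atTop (𝓝 0) := ENNReal.tendsto_atTop_zero_of_tsum_ne_top htop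
    have h1 : Tendsto (fun N => ∑ t ∈ Finset.range N, P t) atTop (𝓝 (∑' t, P t)) :=
      ENNReal.tendsto_nat_tsum P
    have h2 : Tendsto (fun N => M * P N) atTop (𝓝 0) := by
      have := ENNReal.Tendsto.const_mul (a := M) hP0 (Or.inr hM)
      simpa using this
    have h3 : Tendsto (fun N => (∑ t ∈ Finset.range N, P t) + M * P N) atTop
        (𝓝 (∑' t, P t)) := by
      simpa using h1.add h2
    exact ge_of_tendsto' h3 fun N => (key3 N).trans (add_le_add_right (key4 N) _)


/-- The potential function values. -/
def potN (m I : ℕ) : ℕ := 2 ^ (m + 1) - 2 ^ (m + 1 - min I m)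

lemma potN_zero (m : ℕ) : potN m 0 = 0 := by
  unfold potN
  simp

lemma potN_mono (m : ℕ) {a b : ℕ} (h : a ≤ b) : potN m a ≤ potN m b := by
  apply Nat.sub_le_sub_left
  apply Nat.pow_le_pow_right (by norm_num)
  exact Nat.sub_le_sub_left (min_le_min h le_rfl) (m + 1)

lemma potN_le (m I : ℕ) : potN m I ≤ 2 ^ (m + 1) := Nat.sub_le _ _

lemma potN_of_ge (m I : ℕ) (h : m ≤ I) : potN m I = potN m m := by
  unfold potN
  rw [min_eq_right h, min_eq_left le_rfl]

lemma potN_one (m : ℕ) (h : 1 ≤ m) : potN m 1 = 2 ^ m := by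
  unfold potN
  rw [min_eq_left h]
  have h1 : m + 1 - 1 = m := by omega
  rw [h1]
  have h2 : 2 ^ (m + 1) = 2 * 2 ^ m := by ring
  omega

/-- The purely arithmetic drift inequality for the potential values. -/
lemma nat_drift (m I : ℕ) (h1 : 1 ≤ I) (h2 : I ≤ m) :
    3 * potN m I ≤ 3 + 2 * potN m (I + 1) + potN m (I - 1) := by
  unfold potN
  have hminI : min I m = I := min_eq_left h2
  have hminIm : min (I - 1) m = I - 1 := min_eq_left (by omega)
  have p1 : 2 ^ (m + 1 - I) * 2 = 2 ^ (m + 2 - I) := by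
    rw [← pow_succ]; congr 1; omega
  have p3 : 2 ^ (m + 2 - I) ≤ 2 ^ (m + 1) := Nat.pow_le_pow_right (by norm_num) (by omega)
  have h12 : m + 1 - (I - 1) = m + 2 - I := by omega
  rcases lt_or_eq_of_le h2 with hlt | heq
  · have hminI1 : min (I + 1) m = I + 1 := min_eq_left (by omega)
    have p2 : 2 ^ (m - I) * 2 = 2 ^ (m + 1 - I) := by
      rw [← pow_succ]; congr 1; omega
    rw [hminI, hminI1, hminIm, h12]
    have h11 : m + 1 - (I + 1) = m - I := by omega
    rw [h11]
    omega
  · subst heq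
    have hminI1 : min (I + 1) I = I := min_eq_right (by omega)
    rw [hminI, hminI1, hminIm, h12]
    have e1 : I + 1 - I = 1 := by omega
    have e2 : I + 2 - I = 2 := by omega
    rw [e1, e2]
    have : 4 ≤ 2 ^ (I + 1) := by
      calc (4 : ℕ) = 2 ^ 2 := by norm_num
        _ ≤ 2 ^ (I + 1) := Nat.pow_le_pow_right (by norm_num) (by omega)
    omega

/-- Lower bound on expected survival time of the sub-linear clique
infection chain started at one infected vertex. -/
theorem clique_sublinear_survival_lower (n : ℕ) (lam alpha : ℝ)
    (hn : 1 ≤ n) (hlam : 0 < lam) (ha1 : -1 < alpha) (ha2 : alpha < 0)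
    (h1 : (lam * n) ^ (-1 / alpha) ≤ (n : ℝ) / 2)
    (h2 : (2 : ℝ) ≤ (lam * n / 4) ^ (-1 / alpha)) :
    ENNReal.ofReal (((2 : ℝ) ^ ⌊(lam * n / 4) ^ (-1 / alpha)⌋₊ - 1) / 2) ≤
      cliqueET n lam alpha 1 := by
  set X : ℝ := (lam * n / 4) ^ (-1 / alpha) with hX
  set m : ℕ := ⌊X⌋₊ with hm
  have hn' : (0 : ℝ) < n := by exact_mod_cast hn
  have hln : 0 < lam * n := by positivity
  have hln4 : 0 < lam * n / 4 := by positivity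
  have hXpos : 0 < X := Real.rpow_pos_of_pos hln4 _
  have hexp : 0 ≤ -1 / alpha := by
    apply le_of_lt
    rw [div_pos_iff]
    right
    exact ⟨by norm_num, ha2⟩
  have hm2 : 2 ≤ m := Nat.le_floor (by exact_mod_cast h2)
  have hmX : (m : ℝ) ≤ X := Nat.floor_le hXpos.le
  have hXn2 : X ≤ (n : ℝ) / 2 := by
    calc X ≤ (lam * n) ^ (-1 / alpha) :=
          Real.rpow_le_rpow hln4.le (by linarith) hexp
      _ ≤ (n : ℝ) / 2 := h1
  have hmn2 : (m : ℝ) ≤ (n : ℝ) / 2 := hmX.trans hXn2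
  have hmn : m ≤ n := by
    have : (m : ℝ) ≤ n := by linarith
    exact_mod_cast this
  have hXalpha : X ^ alpha = 4 / (lam * n) := by
    have hane : alpha ≠ 0 := ne_of_lt ha2
    rw [hX, ← Real.rpow_mul hln4.le]
    have he : -1 / alpha * alpha = -1 := by field_simp
    rw [he, Real.rpow_neg_one, inv_div]
  have hbias : ∀ I : ℕ, 1 ≤ I → I ≤ m →
      2 * (I : ℝ) ≤ lam * (I : ℝ) ^ (1 + alpha) * ((n : ℝ) - I) := by
    intro I hI1 hIm
    have hIr1 : (1 : ℝ) ≤ I := by exact_mod_cast hI1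
    have hIrpos : (0 : ℝ) < I := by linarith
    have hIX : (I : ℝ) ≤ X := le_trans (by exact_mod_cast hIm) hmX
    have hIa : 4 / (lam * n) ≤ (I : ℝ) ^ alpha := by
      rw [← hXalpha]
      exact Real.rpow_le_rpow_of_nonpos hIrpos hIX ha2.le
    have hIn2 : (I : ℝ) ≤ (n : ℝ) / 2 := by
      calc (I : ℝ) ≤ m := by exact_mod_cast hIm
        _ ≤ (n : ℝ) / 2 := hmn2
    have hnI : (n : ℝ) / 2 ≤ (n : ℝ) - I := by linarith
    have hsplit : (I : ℝ) ^ (1 + alpha) = I * (I : ℝ) ^ alpha := by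
      rw [Real.rpow_add hIrpos, Real.rpow_one]
    rw [hsplit, ← mul_assoc]
    have key : lam * ((I : ℝ) * (4 / (lam * n))) * ((n : ℝ) / 2) = 2 * I := by
      field_simp
      ring
    have t1 : lam * ((I : ℝ) * (4 / (lam * n))) ≤ lam * ((I : ℝ) * (I : ℝ) ^ alpha) := by
      apply mul_le_mul_of_nonneg_left _ hlam.le
      exact mul_le_mul_of_nonneg_left hIa hIrpos.le
    have t2 : lam * ((I : ℝ) * (4 / (lam * n))) * ((n : ℝ) / 2) ≤
        lam * ((I : ℝ) * (I : ℝ) ^ alpha) * ((n : ℝ) - I) := by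
      apply mul_le_mul t1 hnI (by linarith) _
      have h0 : 0 < (I : ℝ) ^ alpha := Real.rpow_pos_of_pos hIrpos _
      positivity
    rw [key] at t2
    calc 2 * (I : ℝ) ≤ lam * ((I : ℝ) * (I : ℝ) ^ alpha) * ((n : ℝ) - I) := t2
      _ = lam * (I : ℝ) * (I : ℝ) ^ alpha * ((n : ℝ) - I) := by ring
  -- the drift inequality for the potential function
  have hdrift : ∀ I, I ≠ 0 →
      ((potN m I : ℕ) : ℝ≥0∞) ≤
        1 + ∑' J, cliqueStep n lam alpha I J * ((potN m J : ℕ) : ℝ≥0∞) := by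
    intro I hI0
    by_cases habs : I = 0 ∨ n < I
    · rw [cliqueStep_tsum_absorb n lam alpha I habs (fun J => ((potN m J : ℕ) : ℝ≥0∞))]
      exact le_add_self
    · push_neg at habs
      have hIn : I ≤ n := habs.2
      have htsum := cliqueStep_tsum n lam alpha I hI0 hIn
        (fun J => ((potN m J : ℕ) : ℝ≥0∞))
      rw [htsum]
      by_cases hIm : I ≤ m
      · -- biased region
        have hI1 : 1 ≤ I := Nat.one_le_iff_ne_zero.mpr hI0
        have hIr1 : (1 : ℝ) ≤ I := by exact_mod_cast hI1
        have h2b : 2 * (I : ℝ) ≤ lam * (I : ℝ) ^ (1 + alpha) * ((n : ℝ) - I) :=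
          hbias I hI1 hIm
        set b : ℝ := lam * (I : ℝ) ^ (1 + alpha) * ((n : ℝ) - I) with hb
        have hbpos : 0 < b := by linarith
        have hD : (0 : ℝ) < b + I := by linarith
        have hprn : 0 ≤ b / (b + I) := div_nonneg hbpos.le hD.le
        have hqrn : 0 ≤ (I : ℝ) / (b + I) := div_nonneg (by linarith) hD.le
        have hpr : (2 : ℝ) / 3 ≤ b / (b + I) := by
          rw [le_div_iff₀ hD]
          linarith
        have hprle : b / (b + I) ≤ 1 := by
          rw [div_le_one hD]; linarith
        have hqr : (I : ℝ) / (b + I) = 1 - b / (b + I) := by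
          field_simp
          ring
        have hnat : 3 * potN m I ≤ 3 + 2 * potN m (I + 1) + potN m (I - 1) :=
          nat_drift m I hI1 hIm
        have hmono : potN m (I - 1) ≤ potN m (I + 1) := potN_mono m (by omega)
        have goalR : ((potN m I : ℕ) : ℝ) ≤ 1 + (b / (b + I) * (potN m (I + 1) : ℕ) +
            (I : ℝ) / (b + I) * (potN m (I - 1) : ℕ)) := by
          have h3 : 3 * ((potN m I : ℕ) : ℝ) ≤
              3 + 2 * ((potN m (I + 1) : ℕ) : ℝ) + ((potN m (I - 1) : ℕ) : ℝ) := by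
            exact_mod_cast hnat
          have hda : ((potN m (I - 1) : ℕ) : ℝ) ≤ ((potN m (I + 1) : ℕ) : ℝ) := by
            exact_mod_cast hmono
          nlinarith [mul_nonneg (by linarith : (0:ℝ) ≤ b / (b + I) - 2/3)
            (by linarith : (0:ℝ) ≤ ((potN m (I + 1) : ℕ) : ℝ) - ((potN m (I - 1) : ℕ) : ℝ))]
        calc ((potN m I : ℕ) : ℝ≥0∞)
            = ENNReal.ofReal ((potN m I : ℕ) : ℝ) := (ENNReal.ofReal_natCast _).symm
          _ ≤ ENNReal.ofReal (1 + (b / (b + I) * (potN m (I + 1) : ℕ) +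
              (I : ℝ) / (b + I) * (potN m (I - 1) : ℕ))) :=
              ENNReal.ofReal_le_ofReal goalR
          _ = 1 + (ENNReal.ofReal (b / (b + I)) * ((potN m (I + 1) : ℕ) : ℝ≥0∞) +
              ENNReal.ofReal ((I : ℝ) / (b + I)) * ((potN m (I - 1) : ℕ) : ℝ≥0∞)) := by
              rw [ENNReal.ofReal_add (by norm_num)
                  (add_nonneg (mul_nonneg hprn (Nat.cast_nonneg _))
                    (mul_nonneg hqrn (Nat.cast_nonneg _))),
                ENNReal.ofReal_add (mul_nonneg hprn (Nat.cast_nonneg _))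
                  (mul_nonneg hqrn (Nat.cast_nonneg _)),
                ENNReal.ofReal_mul hprn, ENNReal.ofReal_mul hqrn,
                ENNReal.ofReal_one, ENNReal.ofReal_natCast, ENNReal.ofReal_natCast]
      · -- flat region: the potential is constant there
        push_neg at hIm
        have e1 : potN m I = potN m m := potN_of_ge m I (by omega)
        have e2 : potN m (I + 1) = potN m m := potN_of_ge m (I + 1) (by omega)
        have e3 : potN m (I - 1) = potN m m := potN_of_ge m (I - 1) (by omega)
        rw [e1, e2, e3, ← add_mul, cliqueStep_pq n lam alpha hlam I hI0 hIn, one_mul]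
        exact le_add_self
  -- apply the master lemma
  have hmain : ((potN m 1 : ℕ) : ℝ≥0∞) ≤ cliqueET n lam alpha 1 := by
    apply subsolution_le_cliqueET n lam alpha hlam 1
      (fun I => ((potN m I : ℕ) : ℝ≥0∞)) (((2 ^ (m + 1) : ℕ) : ℝ≥0∞))
    · exact ENNReal.natCast_ne_top _
    · simp [potN_zero]
    · intro I
      exact_mod_cast Nat.cast_le.mpr (potN_le m I)
    · exact hdrift
  refine le_trans ?_ hmain
  rw [potN_one m (by omega)]
  calc ENNReal.ofReal (((2 : ℝ) ^ m - 1) / 2) ≤ ENNReal.ofReal ((2 : ℝ) ^ m) := by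
        apply ENNReal.ofReal_le_ofReal
        have : (0 : ℝ) ≤ (2 : ℝ) ^ m := by positivity
        linarith
    _ = ((2 ^ m : ℕ) : ℝ≥0∞) := by
        rw [show ((2 : ℝ) ^ m) = ((2 ^ m : ℕ) : ℝ) by push_cast; ring,
          ENNReal.ofReal_natCast]
end

section
/- Let α ∈ (−1,0). There exists a constant C > 0 depending only on α such that for every integer n ≥ 1 and every λ > 0 with λn ≥ 2, the clique infection chain on {0,…,n} started at X₀ = 1 has expected survival time E[T] ≤ C·(λn)^{C·(λn)^{−1/α}}. -/
open scoped ENNReal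
open Filter Asymptotics

lemma tsum_two_point {u v : ℕ} (huv : u ≠ v) (a b : ℝ≥0∞) (g : ℕ → ℝ≥0∞) :
    ∑' J : ℕ, (if J = u then a else if J = v then b else 0) * g J = a * g u + b * g v := by
  rw [tsum_eq_sum (s := {u, v}) (by
    intro J hJ
    simp only [Finset.mem_insert, Finset.mem_singleton, not_or] at hJ
    simp [hJ.1, hJ.2])]
  rw [Finset.sum_insert (by simpa using huv)]
  simp [huv, Ne.symm huv]

lemma markov_support {step : ℕ → ℕ → ℝ≥0∞} {x0 : ℕ} {Good : ℕ → Prop}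
    (hx0 : Good x0) (hclosed : ∀ s J, Good s → step s J ≠ 0 → Good J) :
    ∀ t s, markovDist step x0 t s ≠ 0 → Good s := by
  intro t
  induction t with
  | zero =>
    intro s hs
    rcases eq_or_ne s x0 with h | h
    · exact h ▸ hx0
    · simp [markovDist, h] at hs
  | succ t ih =>
    intro s hs
    simp only [markovDist] at hs
    obtain ⟨u, hu⟩ : ∃ u, markovDist step x0 t u * step u s ≠ 0 := by
      by_contra h
      push_neg at h
      exact hs (by rw [ENNReal.tsum_eq_zero]; exact h)
    have h1 : markovDist step x0 t u ≠ 0 := fun h0 => hu (by rw [h0, zero_mul])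
    have h2 : step u s ≠ 0 := fun h0 => hu (by rw [h0, mul_zero])
    exact hclosed u s (ih u h1) h2

lemma markov_mass {step : ℕ → ℕ → ℝ≥0∞} (hrow : ∀ s, ∑' J, step s J = 1) (x0 : ℕ) :
    ∀ t, ∑' s, markovDist step x0 t s = 1 := by
  intro t
  induction t with
  | zero =>
    rw [tsum_eq_single x0 (by intro s hs; simp [markovDist, hs])]
    simp [markovDist]
  | succ t ih =>
    calc ∑' J, markovDist step x0 (t + 1) J
        = ∑' J, ∑' s, markovDist step x0 t s * step s J := rfl
      _ = ∑' s, ∑' J, markovDist step x0 t s * step s J := ENNReal.tsum_comm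
      _ = ∑' s, markovDist step x0 t s * ∑' J, step s J :=
          tsum_congr fun s => ENNReal.tsum_mul_left
      _ = ∑' s, markovDist step x0 t s := by simp [hrow]
      _ = 1 := ih

lemma markov_ET_le {step : ℕ → ℕ → ℝ≥0∞} {x0 : ℕ} {Good : ℕ → Prop} {F : ℕ → ℝ≥0∞}
    (hrow : ∀ s, ∑' J, step s J = 1)
    (habs : ∀ J, J ≠ 0 → step 0 J = 0)
    (hx0 : Good x0)
    (hclosed : ∀ s J, Good s → step s J ≠ 0 → Good J)
    (hF0 : F 0 = 0)
    (hsup : ∀ s, s ≠ 0 → Good s → (∑' J, step s J * F J) + 1 ≤ F s) :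
    (∑' t, (1 - markovDist step x0 t 0)) ≤ F x0 := by
  set D := markovDist step x0 with hD
  have hsupp : ∀ t s, D t s ≠ 0 → Good s := markov_support hx0 hclosed
  have hmass : ∀ t, ∑' s, D t s = 1 := markov_mass hrow x0
  set G : ℕ → ℝ≥0∞ := fun t => ∑' s, D t s * F s with hG
  have key : ∀ t, (∑ u ∈ Finset.range t, (1 - D u 0)) + G t ≤ F x0 := by
    intro t
    induction t with
    | zero =>
      simp only [Finset.range_zero, Finset.sum_empty, zero_add]
      have : G 0 = F x0 := by
        simp only [hG, hD]
        rw [tsum_eq_single x0 (by intro s hs; simp [markovDist, hs])]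
        simp [markovDist]
      exact this.le
    | succ t ih =>
      have hinner0 : (∑' J, step 0 J * F J) = 0 := by
        rw [ENNReal.tsum_eq_zero]
        intro J
        by_cases hJ : J = 0
        · subst hJ; rw [hF0, mul_zero]
        · rw [habs J hJ, zero_mul]
      have hGsucc : G (t + 1) = ∑' s, D t s * (∑' J, step s J * F J) := by
        simp only [hG, hD]
        calc (∑' J, markovDist step x0 (t+1) J * F J)
            = ∑' J, (∑' s, markovDist step x0 t s * step s J) * F J := rfl
          _ = ∑' J, ∑' s, markovDist step x0 t s * step s J * F J :=
              tsum_congr fun J => ENNReal.tsum_mul_right.symm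
          _ = ∑' s, ∑' J, markovDist step x0 t s * step s J * F J := ENNReal.tsum_comm
          _ = ∑' s, markovDist step x0 t s * ∑' J, step s J * F J := by
              refine tsum_congr fun s => ?_
              rw [← ENNReal.tsum_mul_left]
              exact tsum_congr fun J => mul_assoc _ _ _
      have hstep2 : G (t + 1) + (∑' s, if s = 0 then 0 else D t s) ≤ G t := by
        rw [hGsucc, ← ENNReal.tsum_add]
        refine ENNReal.tsum_le_tsum fun s => ?_
        by_cases hs : s = 0
        · subst hs
          simp [hinner0]
        · by_cases hz : D t s = 0
          · simp [hz, hs]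
          · have hGs := hsupp t s hz
            simp only [if_neg hs]
            calc D t s * (∑' J, step s J * F J) + D t s
                = D t s * ((∑' J, step s J * F J) + 1) := by ring
              _ ≤ D t s * F s := mul_le_mul_right (hsup s hs hGs) _
      have hsub : (1 - D t 0) ≤ ∑' s, if s = 0 then 0 else D t s := by
        refine tsub_le_iff_left.mpr ?_
        have hsplit : ∑' s, D t s = D t 0 + ∑' s, (if s = 0 then 0 else D t s) := by
          have h1 : ∀ s, D t s =
              (if s = 0 then D t s else 0) + (if s = 0 then 0 else D t s) := by
            intro s; by_cases h : s = 0 <;> simp [h]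
          rw [tsum_congr h1, ENNReal.tsum_add,
            tsum_eq_single 0 (f := fun s => if s = 0 then D t s else 0)
              (by intro b hb; simp [hb])]
          simp
        rw [← hsplit, hmass t]
      calc (∑ u ∈ Finset.range (t + 1), (1 - D u 0)) + G (t + 1)
          = (∑ u ∈ Finset.range t, (1 - D u 0)) + ((1 - D t 0) + G (t + 1)) := by
            rw [Finset.sum_range_succ]; ring
        _ ≤ (∑ u ∈ Finset.range t, (1 - D u 0)) +
              ((∑' s, if s = 0 then 0 else D t s) + G (t + 1)) := by gcongr
        _ ≤ (∑ u ∈ Finset.range t, (1 - D u 0)) + G t := by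
            refine add_le_add_right ?_ _
            rw [add_comm]; exact hstep2
        _ ≤ F x0 := ih
  rw [ENNReal.tsum_eq_iSup_nat]
  exact iSup_le fun t => le_trans (le_add_right le_rfl) (key t)

lemma tsum_two_point' {u v : ℕ} (huv : u ≠ v) (a b : ℝ≥0∞) :
    ∑' J : ℕ, (if J = u then a else if J = v then b else 0) = a + b := by
  simpa using tsum_two_point huv a b (fun _ => 1)

set_option maxHeartbeats 2000000 in
lemma clique_bound_aux (n : ℕ) (lam alpha : ℝ) (ha2 : alpha < 0)
    (hn : 1 ≤ n) (hlam : 0 < lam) (hx2 : 2 ≤ lam * n) :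
    cliqueET n lam alpha 1 ≤ ENNReal.ofReal
      (2 * (1 + lam * n) *
        (2 * (lam * n)) ^ (⌈(2 * (lam * n)) ^ ((1 : ℝ) / (-alpha))⌉₊ - 1)) := by
  set x : ℝ := lam * n with hxdef
  have hx0 : (0:ℝ) < x := lt_of_lt_of_le two_pos hx2
  have hβ0 : (0:ℝ) < -alpha := by linarith
  set M : ℕ := ⌈(2 * x) ^ ((1 : ℝ) / (-alpha))⌉₊ with hMdef
  have h2x1 : (1:ℝ) ≤ 2 * x := by linarith
  have hM1 : 1 ≤ M := by
    rw [hMdef]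
    exact Nat.one_le_iff_ne_zero.mpr
      (Nat.ceil_pos.mpr (Real.rpow_pos_of_pos (by linarith) _)).ne'
  set d : ℕ → ℝ := fun k => 2 * (1 + x) * (2 * x) ^ (M - k) with hddef
  set f : ℕ → ℝ := fun I => ∑ k ∈ Finset.range I, d (k + 1) with hfdef
  have hd_nonneg : ∀ k, 0 ≤ d k := fun k => by
    have h1 : (0:ℝ) ≤ (2 * x) ^ (M - k) := pow_nonneg (by linarith) _
    simp only [hddef]
    nlinarith
  have hf_nonneg : ∀ I, 0 ≤ f I := fun I => Finset.sum_nonneg fun k _ => hd_nonneg _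
  have hf_succ : ∀ I, f (I + 1) = f I + d (I + 1) := fun I => Finset.sum_range_succ _ _
  -- the core one-dimensional inequality
  have hd1 : ∀ k : ℕ, 1 ≤ k → 1 + (x * (k:ℝ) ^ alpha) * (1 + d (k + 1)) ≤ d k := by
    intro k hk
    have hk0 : (0:ℝ) < k := by exact_mod_cast hk
    have hr0 : 0 ≤ x * (k:ℝ) ^ alpha := mul_nonneg hx0.le (Real.rpow_nonneg hk0.le _)
    by_cases hkM : k < M
    · obtain ⟨m, hm, hm'⟩ : ∃ m, M - k = m + 1 ∧ M - (k + 1) = m :=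
        ⟨M - (k + 1), by omega, rfl⟩
      have hka : (k:ℝ) ^ alpha ≤ 1 :=
        Real.rpow_le_one_of_one_le_of_nonpos (by exact_mod_cast hk) ha2.le
      have hr : x * (k:ℝ) ^ alpha ≤ x := by nlinarith
      have hP : (1:ℝ) ≤ (2 * x) ^ m := one_le_pow₀ h2x1
      have hdk1 : d (k + 1) = 2 * (1 + x) * (2 * x) ^ m := by
        simp only [hddef, hm']
      have hdk : d k = 2 * (1 + x) * ((2 * x) ^ m * (2 * x)) := by
        simp only [hddef, hm, pow_succ]
      have hdk1_nonneg : (0:ℝ) ≤ 2 * (1 + x) * (2 * x) ^ m := by nlinarith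
      have hmul : (x * (k:ℝ) ^ alpha) * (1 + 2 * (1 + x) * (2 * x) ^ m) ≤
          x * (1 + 2 * (1 + x) * (2 * x) ^ m) :=
        mul_le_mul_of_nonneg_right hr (by nlinarith)
      rw [hdk, hdk1]
      nlinarith [mul_le_mul_of_nonneg_left hP (show (0:ℝ) ≤ 2 * x * (1 + x) by nlinarith)]
    · push_neg at hkM
      have hm : M - k = 0 := by omega
      have hm' : M - (k + 1) = 0 := by omega
      have hdk : d k = 2 * (1 + x) := by simp only [hddef, hm, pow_zero, mul_one]
      have hdk1 : d (k + 1) = 2 * (1 + x) := by simp only [hddef, hm', pow_zero, mul_one]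
      have h1 : ((2 * x) ^ ((1:ℝ) / (-alpha))) ≤ (k:ℝ) :=
        le_trans (Nat.le_ceil _) (by exact_mod_cast hkM)
      have hcb : 2 * x ≤ (k:ℝ) ^ (-alpha) := by
        calc 2 * x = (2 * x) ^ ((1:ℝ) / (-alpha) * (-alpha)) := by
              rw [one_div_mul_cancel hβ0.ne', Real.rpow_one]
          _ = ((2 * x) ^ ((1:ℝ) / (-alpha))) ^ (-alpha) :=
              Real.rpow_mul (by linarith) _ _
          _ ≤ (k:ℝ) ^ (-alpha) :=
              Real.rpow_le_rpow (Real.rpow_nonneg (by linarith) _) h1 hβ0.le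
      have hka : (k:ℝ) ^ alpha = ((k:ℝ) ^ (-alpha))⁻¹ := by
        rw [← Real.rpow_neg hk0.le, neg_neg]
      have hr : x * (k:ℝ) ^ alpha ≤ 1 / 2 := by
        rw [hka, ← div_eq_mul_inv]
        have hkb0 : (0:ℝ) < (k:ℝ) ^ (-alpha) := Real.rpow_pos_of_pos hk0 _
        rw [div_le_iff₀ hkb0]
        linarith
      rw [hdk, hdk1]
      nlinarith [mul_le_mul_of_nonneg_right hr (show (0:ℝ) ≤ 1 + 2 * (1 + x) by nlinarith)]
  -- the superharmonic inequality, real form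
  have hkey : ∀ k : ℕ, 1 ≤ k → k ≤ n →
      lam * (k:ℝ) ^ (1 + alpha) * ((n:ℝ) - k) /
          (lam * (k:ℝ) ^ (1 + alpha) * ((n:ℝ) - k) + k) * f (k + 1)
        + (k:ℝ) / (lam * (k:ℝ) ^ (1 + alpha) * ((n:ℝ) - k) + k) * f (k - 1) + 1 ≤ f k := by
    intro k hk hkn
    set b : ℝ := lam * (k:ℝ) ^ (1 + alpha) * ((n:ℝ) - k) with hbdef
    have hk0 : (0:ℝ) < k := by exact_mod_cast hk
    have hkn' : (k:ℝ) ≤ n := by exact_mod_cast hkn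
    have hb0 : 0 ≤ b :=
      mul_nonneg (mul_nonneg hlam.le (Real.rpow_nonneg hk0.le _)) (by linarith)
    have hD : (0:ℝ) < b + k := by linarith
    have hbr : b ≤ (k:ℝ) * (x * (k:ℝ) ^ alpha) := by
      have h1 : (k:ℝ) ^ (1 + alpha) = (k:ℝ) * (k:ℝ) ^ alpha := by
        rw [Real.rpow_add hk0, Real.rpow_one]
      have h2 : (n:ℝ) - k ≤ n := by linarith
      calc b = lam * ((k:ℝ) * (k:ℝ) ^ alpha) * ((n:ℝ) - k) := by rw [hbdef, h1]
        _ ≤ lam * ((k:ℝ) * (k:ℝ) ^ alpha) * n := by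
            apply mul_le_mul_of_nonneg_left h2
            exact mul_nonneg hlam.le (mul_nonneg hk0.le (Real.rpow_nonneg hk0.le _))
        _ = (k:ℝ) * (x * (k:ℝ) ^ alpha) := by rw [hxdef]; ring
    have hkd : (b + k) + b * d (k + 1) ≤ (k:ℝ) * d k := by
      have h1 : (k:ℝ) * (1 + (x * (k:ℝ) ^ alpha) * (1 + d (k + 1))) ≤ (k:ℝ) * d k :=
        mul_le_mul_of_nonneg_left (hd1 k hk) hk0.le
      have h2 : b * (1 + d (k + 1)) ≤ ((k:ℝ) * (x * (k:ℝ) ^ alpha)) * (1 + d (k + 1)) :=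
        mul_le_mul_of_nonneg_right hbr (by linarith [hd_nonneg (k + 1)])
      nlinarith
    have hfk : f k = f (k - 1) + d k := by
      obtain ⟨j, rfl⟩ : ∃ j, k = j + 1 := ⟨k - 1, by omega⟩
      simp only [Nat.add_sub_cancel]
      exact hf_succ j
    have hfk1 : f (k + 1) = f (k - 1) + d k + d (k + 1) := by rw [hf_succ k, hfk]
    have heq : b / (b + k) * f (k + 1) + (k:ℝ) / (b + k) * f (k - 1) + 1
        = (b * f (k + 1) + k * f (k - 1) + (b + k)) / (b + k) := by
      field_simp
    rw [heq, div_le_iff₀ hD]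
    have e1 : b * f (k + 1) = b * f (k - 1) + b * d k + b * d (k + 1) := by
      rw [hfk1]; ring
    have e2 : f k * (b + k) = b * f (k - 1) + (k:ℝ) * f (k - 1) + b * d k + (k:ℝ) * d k := by
      rw [hfk]; ring
    linarith [hkd, e1, e2]
  -- Markov chain hypotheses
  have hrow : ∀ s, ∑' J, cliqueStep n lam alpha s J = 1 := by
    intro s
    by_cases hs : s = 0 ∨ n < s
    · have hstep : cliqueStep n lam alpha s = fun J => if J = s then 1 else 0 := by
        rw [cliqueStep, if_pos hs]
      rw [hstep, tsum_eq_single s (by intro b hb; simp [hb])]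
      simp
    · push_neg at hs
      obtain ⟨hs0, hsn⟩ := hs
      have hs1 : 1 ≤ s := Nat.one_le_iff_ne_zero.mpr hs0
      set b : ℝ := lam * (s:ℝ) ^ (1 + alpha) * ((n:ℝ) - s) with hbdef
      have hs0' : (0:ℝ) < s := by exact_mod_cast hs1
      have hsn' : (s:ℝ) ≤ n := by exact_mod_cast hsn
      have hb0 : 0 ≤ b :=
        mul_nonneg (mul_nonneg hlam.le (Real.rpow_nonneg hs0'.le _)) (by linarith)
      have hD : (0:ℝ) < b + s := by linarith
      have hstep : cliqueStep n lam alpha s = fun J =>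
          if J = s + 1 then ENNReal.ofReal (b / (b + s))
          else if J = s - 1 then ENNReal.ofReal ((s:ℝ) / (b + s)) else 0 := by
        rw [cliqueStep, if_neg (not_or.mpr ⟨hs0, not_lt.mpr hsn⟩)]
      rw [hstep, tsum_two_point' (by omega),
        ← ENNReal.ofReal_add (div_nonneg hb0 hD.le) (div_nonneg hs0'.le hD.le),
        ← add_div, div_self hD.ne']
      exact ENNReal.ofReal_one
  have habs : ∀ J, J ≠ 0 → cliqueStep n lam alpha 0 J = 0 := by
    intro J hJ
    have h : cliqueStep n lam alpha 0 = fun J => if J = 0 then 1 else 0 := by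
      rw [cliqueStep, if_pos (Or.inl rfl)]
    rw [h]
    simp [hJ]
  have hclosed : ∀ s J, s ≤ n → cliqueStep n lam alpha s J ≠ 0 → J ≤ n := by
    intro s J hsn hne
    by_cases hs : s = 0 ∨ n < s
    · have h : cliqueStep n lam alpha s = fun J => if J = s then 1 else 0 := by
        rw [cliqueStep, if_pos hs]
      rw [h] at hne
      by_cases hJ : J = s
      · omega
      · simp [hJ] at hne
    · push_neg at hs
      obtain ⟨hs0, hsn'⟩ := hs
      have h : cliqueStep n lam alpha s = fun J =>
          if J = s + 1 then
            ENNReal.ofReal (lam * (s:ℝ) ^ (1 + alpha) * ((n:ℝ) - s) /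
              (lam * (s:ℝ) ^ (1 + alpha) * ((n:ℝ) - s) + s))
          else if J = s - 1 then
            ENNReal.ofReal ((s:ℝ) /
              (lam * (s:ℝ) ^ (1 + alpha) * ((n:ℝ) - s) + s)) else 0 := by
        rw [cliqueStep, if_neg (not_or.mpr ⟨hs0, not_lt.mpr hsn'⟩)]
      rw [h] at hne
      by_cases h1 : J = s + 1
      · by_contra hJn
        push_neg at hJn
        have hsn2 : s = n := by omega
        subst hsn2
        exact hne (by simp [h1, sub_self])
      · by_cases h2 : J = s - 1
        · omega
        · exact absurd (by simp [h1, h2]) hne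
  have hsupE : ∀ s, s ≠ 0 → s ≤ n →
      (∑' J, cliqueStep n lam alpha s J * ENNReal.ofReal (f J)) + 1 ≤ ENNReal.ofReal (f s) := by
    intro s hs0 hsn
    have hs1 : 1 ≤ s := Nat.one_le_iff_ne_zero.mpr hs0
    set b : ℝ := lam * (s:ℝ) ^ (1 + alpha) * ((n:ℝ) - s) with hbdef
    have hs0' : (0:ℝ) < s := by exact_mod_cast hs1
    have hsn' : (s:ℝ) ≤ n := by exact_mod_cast hsn
    have hb0 : 0 ≤ b :=
      mul_nonneg (mul_nonneg hlam.le (Real.rpow_nonneg hs0'.le _)) (by linarith)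
    have hD : (0:ℝ) < b + s := by linarith
    have hstep : cliqueStep n lam alpha s = fun J =>
        if J = s + 1 then ENNReal.ofReal (b / (b + s))
        else if J = s - 1 then ENNReal.ofReal ((s:ℝ) / (b + s)) else 0 := by
      rw [cliqueStep, if_neg (not_or.mpr ⟨hs0, not_lt.mpr hsn⟩)]
    have htsum : (∑' J, cliqueStep n lam alpha s J * ENNReal.ofReal (f J))
        = ENNReal.ofReal (b / (b + s)) * ENNReal.ofReal (f (s + 1))
          + ENNReal.ofReal ((s:ℝ) / (b + s)) * ENNReal.ofReal (f (s - 1)) := by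
      calc (∑' J, cliqueStep n lam alpha s J * ENNReal.ofReal (f J))
          = ∑' J, (if J = s + 1 then ENNReal.ofReal (b / (b + s))
              else if J = s - 1 then ENNReal.ofReal ((s:ℝ) / (b + s)) else 0)
              * ENNReal.ofReal (f J) := by
            refine tsum_congr fun J => ?_
            rw [hstep]
        _ = _ := tsum_two_point (by omega) _ _ _
    have hp1 : 0 ≤ b / (b + s) * f (s + 1) :=
      mul_nonneg (div_nonneg hb0 hD.le) (hf_nonneg _)
    have hp2 : 0 ≤ (s:ℝ) / (b + s) * f (s - 1) :=
      mul_nonneg (div_nonneg hs0'.le hD.le) (hf_nonneg _)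
    rw [htsum, ← ENNReal.ofReal_mul (div_nonneg hb0 hD.le),
      ← ENNReal.ofReal_mul (div_nonneg hs0'.le hD.le), ← ENNReal.ofReal_one,
      ← ENNReal.ofReal_add hp1 hp2, ← ENNReal.ofReal_add (add_nonneg hp1 hp2) zero_le_one]
    exact ENNReal.ofReal_le_ofReal (hkey s hs1 hsn)
  have hET := markov_ET_le (step := cliqueStep n lam alpha) (x0 := 1)
    (Good := fun s => s ≤ n) (F := fun s => ENNReal.ofReal (f s)) hrow habs hn hclosed
    (by simp [hfdef]) hsupE
  have hf1 : f 1 = 2 * (1 + x) * (2 * x) ^ (M - 1) := by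
    simp [hfdef, hddef, Finset.sum_range_one]
  calc cliqueET n lam alpha 1 = ∑' t, (1 - markovDist (cliqueStep n lam alpha) 1 t 0) := rfl
    _ ≤ ENNReal.ofReal (f 1) := hET
    _ = ENNReal.ofReal (2 * (1 + x) * (2 * x) ^ (M - 1)) := by rw [hf1]

set_option maxHeartbeats 1000000 in
/-- Upper bound on expected survival time of the sub-linear clique
infection chain started at one infected vertex, when λn ≥ 2. -/
theorem clique_sublinear_survival_upper (alpha : ℝ) (ha1 : -1 < alpha) (ha2 : alpha < 0) :
    ∃ C : ℝ, 0 < C ∧ ∀ (n : ℕ) (lam : ℝ), 1 ≤ n → 0 < lam → 2 ≤ lam * n →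
      cliqueET n lam alpha 1 ≤
        ENNReal.ofReal (C * (lam * n) ^ (C * (lam * n) ^ (-1 / alpha))) := by
  set e : ℝ := -1 / alpha with hedef
  have hβ0 : (0:ℝ) < -alpha := by linarith
  have he2 : (1:ℝ) / (-alpha) = e := by
    rw [hedef]
    field_simp
  have he0 : 0 < e := he2 ▸ div_pos one_pos hβ0
  have h2e0 : (0:ℝ) < (2:ℝ) ^ e := Real.rpow_pos_of_pos two_pos e
  refine ⟨2 * (2:ℝ) ^ e + 4, by linarith, ?_⟩
  set C : ℝ := 2 * (2:ℝ) ^ e + 4 with hCdef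
  intro n lam hn hlam hx2
  refine le_trans (clique_bound_aux n lam alpha ha2 hn hlam hx2)
    (ENNReal.ofReal_le_ofReal ?_)
  set x : ℝ := lam * n with hxdef
  have hx0 : (0:ℝ) < x := lt_of_lt_of_le two_pos hx2
  have hx1 : (1:ℝ) ≤ x := by linarith
  set M : ℕ := ⌈(2 * x) ^ ((1 : ℝ) / (-alpha))⌉₊ with hMdef
  have hM1 : 1 ≤ M := by
    rw [hMdef]
    exact Nat.one_le_iff_ne_zero.mpr
      (Nat.ceil_pos.mpr (Real.rpow_pos_of_pos (by linarith) _)).ne'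
  have hy1 : (1:ℝ) ≤ x ^ e := by
    calc (1:ℝ) = (1:ℝ) ^ e := (Real.one_rpow e).symm
      _ ≤ x ^ e := Real.rpow_le_rpow zero_le_one hx1 he0.le
  have h2xe : (2 * x) ^ ((1:ℝ) / (-alpha)) = (2:ℝ) ^ e * x ^ e := by
    rw [he2, Real.mul_rpow (by norm_num) hx0.le]
  have hMle : (M:ℝ) ≤ (2:ℝ) ^ e * x ^ e + 1 := by
    rw [hMdef]
    calc ((⌈(2 * x) ^ ((1 : ℝ) / (-alpha))⌉₊ : ℝ))
        ≤ (2 * x) ^ ((1:ℝ) / (-alpha)) + 1 :=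
          (Nat.ceil_lt_add_one (Real.rpow_nonneg (by linarith : (0:ℝ) ≤ 2 * x)
            ((1:ℝ) / (-alpha)))).le
      _ = (2:ℝ) ^ e * x ^ e + 1 := by rw [h2xe]
  have hexp : 2 * (M:ℝ) ≤ C * x ^ e := by
    have hCx : C * x ^ e = 2 * ((2:ℝ) ^ e * x ^ e) + 4 * x ^ e := by
      rw [hCdef]; ring
    linarith
  have h1x : 1 + x ≤ x ^ 2 := by nlinarith
  have h2x : 2 * x ≤ x ^ 2 := by nlinarith
  have hpow1 : 2 * (1 + x) * (2 * x) ^ (M - 1) ≤ 2 * x ^ (2 * M) := by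
    have hpb : (2 * x) ^ (M - 1) ≤ (x ^ 2) ^ (M - 1) :=
      pow_le_pow_left₀ (by linarith) h2x _
    have hstep : 2 * (1 + x) * (2 * x) ^ (M - 1) ≤ (2 * x ^ 2) * ((x ^ 2) ^ (M - 1)) := by
      apply mul_le_mul (by linarith) hpb (pow_nonneg (by linarith) _) (by nlinarith)
    calc 2 * (1 + x) * (2 * x) ^ (M - 1) ≤ (2 * x ^ 2) * ((x ^ 2) ^ (M - 1)) := hstep
      _ = 2 * x ^ (2 * M) := by
          have harith : 2 + 2 * (M - 1) = 2 * M := by omega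
          rw [mul_assoc, ← pow_mul, ← pow_add, harith]
  have hcast : ((2 * M : ℕ) : ℝ) = 2 * (M:ℝ) := by push_cast; ring
  have hmono : x ^ (((2 * M : ℕ)) : ℝ) ≤ x ^ (C * x ^ e) :=
    Real.rpow_le_rpow_of_exponent_le hx1 (by rw [hcast]; exact hexp)
  calc 2 * (1 + x) * (2 * x) ^ (M - 1)
      ≤ 2 * x ^ (2 * M) := hpow1
    _ = 2 * x ^ (((2 * M : ℕ)) : ℝ) := by rw [Real.rpow_natCast]
    _ ≤ 2 * x ^ (C * x ^ e) := by
        exact mul_le_mul_of_nonneg_left hmono (by norm_num)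
    _ ≤ C * x ^ (C * x ^ e) := by
        refine mul_le_mul_of_nonneg_right (by rw [hCdef]; linarith)
          (Real.rpow_nonneg hx0.le _)
end

section
/- Let α ∈ (−1,0) be fixed and let λ : ℕ → ℝ_{>0} satisfy λ(n)·n·(log n)^α → ∞ as n → ∞ (i.e. λ ∈ ω(log(n)^{−α}/n)). For each n, let T_n be the survival time of the clique infection chain on {0,…,n} with parameters λ(n), α, started at X₀ = 1. Then E[T_n] is super-polynomial in n: for every k ∈ ℕ, E[T_n]/n^k → ∞ as n → ∞. -/
open scoped ENNReal
open Filter Asymptotics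

section general
variable (step : ℕ → ℕ → ℝ≥0∞) (x0 : ℕ)

lemma markov_mass_le_one (hrow : ∀ s, ∑' J, step s J ≤ 1) :
    ∀ t, ∑' s, markovDist step x0 t s ≤ 1 := by
  intro t
  induction t with
  | zero => simp [markovDist, tsum_ite_eq]
  | succ t ih =>
    show ∑' J, ∑' s, markovDist step x0 t s * step s J ≤ 1
    rw [ENNReal.tsum_comm]
    calc ∑' s, ∑' J, markovDist step x0 t s * step s J
        = ∑' s, markovDist step x0 t s * ∑' J, step s J := by
          exact tsum_congr fun s => ENNReal.tsum_mul_left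
      _ ≤ ∑' s, markovDist step x0 t s * 1 :=
          ENNReal.tsum_le_tsum fun s => mul_le_mul_right (hrow s) _
      _ ≤ 1 := by simpa using ih

lemma markov_telescope (f : ℕ → ℝ≥0∞)
    (hstep : ∀ s, f s ≤ (if s = 0 then 0 else 1) + ∑' J, step s J * f J) :
    ∀ N, f x0 ≤ (∑ t ∈ Finset.range N,
        ∑' s, markovDist step x0 t s * (if s = 0 then (0:ℝ≥0∞) else 1))
      + ∑' s, markovDist step x0 N s * f s := by
  intro N
  induction N with
  | zero =>
    have : ∑' s, markovDist step x0 0 s * f s = f x0 := by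
      have h : ∀ s, markovDist step x0 0 s * f s = if s = x0 then f x0 else 0 := by
        intro s
        show (if s = x0 then (1:ℝ≥0∞) else 0) * f s = _
        split_ifs with h <;> simp [h]
      rw [tsum_congr h, tsum_ite_eq]
    simp [this]
  | succ N ih =>
    have key : ∑' s, markovDist step x0 N s * f s
        ≤ (∑' s, markovDist step x0 N s * (if s = 0 then (0:ℝ≥0∞) else 1))
          + ∑' s, markovDist step x0 (N+1) s * f s := by
      calc ∑' s, markovDist step x0 N s * f s
          ≤ ∑' s, markovDist step x0 N s *
              ((if s = 0 then (0:ℝ≥0∞) else 1) + ∑' J, step s J * f J) :=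
            ENNReal.tsum_le_tsum fun s => mul_le_mul_right (hstep s) _
        _ = (∑' s, markovDist step x0 N s * (if s = 0 then (0:ℝ≥0∞) else 1))
            + ∑' s, markovDist step x0 N s * ∑' J, step s J * f J := by
            rw [← ENNReal.tsum_add]; exact tsum_congr fun s => mul_add _ _ _
        _ = (∑' s, markovDist step x0 N s * (if s = 0 then (0:ℝ≥0∞) else 1))
            + ∑' s, markovDist step x0 (N+1) s * f s := by
            congr 1
            calc ∑' s, markovDist step x0 N s * ∑' J, step s J * f J
                = ∑' s, ∑' J, markovDist step x0 N s * (step s J * f J) :=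
                  tsum_congr fun s => ENNReal.tsum_mul_left.symm
              _ = ∑' J, ∑' s, markovDist step x0 N s * step s J * f J := by
                  rw [ENNReal.tsum_comm]
                  exact tsum_congr fun J => tsum_congr fun s => (mul_assoc _ _ _).symm
              _ = ∑' J, (∑' s, markovDist step x0 N s * step s J) * f J :=
                  tsum_congr fun J => ENNReal.tsum_mul_right
              _ = ∑' J, markovDist step x0 (N+1) J * f J := rfl
    calc f x0 ≤ _ + ∑' s, markovDist step x0 N s * f s := ih
      _ ≤ _ := by
          rw [Finset.sum_range_succ, add_assoc]
          exact add_le_add_right key _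

lemma survival_lower (hrow : ∀ s, ∑' J, step s J ≤ 1)
    (f : ℕ → ℝ≥0∞) (hf0 : f 0 = 0)
    (C : ℝ≥0∞) (hCtop : C ≠ ⊤) (hfC : ∀ s, f s ≤ C)
    (hstep : ∀ s, f s ≤ (if s = 0 then 0 else 1) + ∑' J, step s J * f J) :
    f x0 ≤ 1 + ∑' t, (1 - markovDist step x0 t 0) := by
  set μ := markovDist step x0 with hμ
  have hAle : ∀ t, (∑' s, μ t s * (if s = 0 then (0:ℝ≥0∞) else 1)) ≤ 1 - μ t 0 := by
    intro t
    apply ENNReal.le_sub_of_add_le_right (ne_top_of_le_ne_top ENNReal.one_ne_top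
      (le_trans (ENNReal.le_tsum 0) (markov_mass_le_one step x0 hrow t)))
    calc (∑' s, μ t s * (if s = 0 then (0:ℝ≥0∞) else 1)) + μ t 0
        = (∑' s, μ t s * (if s = 0 then (0:ℝ≥0∞) else 1))
          + ∑' s, (if s = 0 then μ t s else 0) := by
          congr 1
          have := tsum_eq_single (L := SummationFilter.unconditional ℕ) (f := fun s => if s = 0 then μ t s else 0) 0
            (fun b hb => if_neg hb)
          simp only [if_pos rfl] at this
          exact this.symm
      _ = ∑' s, μ t s := by
          rw [← ENNReal.tsum_add]
          exact tsum_congr fun s => by split_ifs with h <;> simp [h]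
      _ ≤ 1 := markov_mass_le_one step x0 hrow t
  by_cases hex : ∃ N, 1 - μ N 0 ≤ C⁻¹
  · obtain ⟨N, hN⟩ := hex
    have hE : ∑' s, μ N s * f s ≤ 1 := by
      calc ∑' s, μ N s * f s
          ≤ ∑' s, (μ N s * (if s = 0 then (0:ℝ≥0∞) else 1)) * C := by
            apply ENNReal.tsum_le_tsum
            intro s
            by_cases h : s = 0
            · simp [h, hf0]
            · rw [if_neg h, mul_one]
              exact mul_le_mul_right (hfC s) _
        _ = (∑' s, μ N s * (if s = 0 then (0:ℝ≥0∞) else 1)) * C := ENNReal.tsum_mul_right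
        _ ≤ C⁻¹ * C := mul_le_mul' (le_trans (hAle N) hN) le_rfl
        _ ≤ 1 := ENNReal.inv_mul_le_one C
    calc f x0 ≤ (∑ t ∈ Finset.range N,
          ∑' s, μ t s * (if s = 0 then (0:ℝ≥0∞) else 1)) + ∑' s, μ N s * f s :=
        markov_telescope step x0 f hstep N
      _ ≤ (∑ t ∈ Finset.range N, (1 - μ t 0)) + 1 :=
        add_le_add (Finset.sum_le_sum fun t _ => hAle t) hE
      _ ≤ (∑' t, (1 - μ t 0)) + 1 := add_le_add_left (ENNReal.sum_le_tsum _) 1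
      _ = 1 + ∑' t, (1 - μ t 0) := add_comm _ _
  · push_neg at hex
    have hC0 : C⁻¹ ≠ 0 := by
      simp [ENNReal.inv_ne_zero]
      exact hCtop
    have : (∑' t : ℕ, C⁻¹) ≤ ∑' t, (1 - μ t 0) :=
      ENNReal.tsum_le_tsum fun t => (hex t).le
    rw [ENNReal.tsum_const_eq_top_of_ne_zero hC0] at this
    calc f x0 ≤ C := hfC x0
      _ ≤ ⊤ := le_top
      _ ≤ _ := by rw [← top_le_iff.mp this]; exact le_add_self

end general

lemma delta_tsum (s : ℕ) (g : ℕ → ℝ≥0∞) :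
    ∑' J, (if J = s then (1:ℝ≥0∞) else 0) * g J = g s := by
  have h : ∀ J, (if J = s then (1:ℝ≥0∞) else 0) * g J = if J = s then g s else 0 := by
    intro J; split_ifs with h <;> simp [h]
  rw [tsum_congr h]
  have := tsum_eq_single (L := SummationFilter.unconditional ℕ) (f := fun J => if J = s then g s else 0) s (fun b hb => if_neg hb)
  simpa using this

lemma twoPoint_tsum {i j : ℕ} (h : i ≠ j) (a b : ℝ≥0∞) (g : ℕ → ℝ≥0∞) :
    ∑' J : ℕ, (if J = i then a else if J = j then b else 0) * g J = a * g i + b * g j := by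
  have hc : ∀ J, (if J = i then a else if J = j then b else 0) * g J
      = (if J = i then a * g i else 0) + (if J = j then b * g j else 0) := by
    intro J
    by_cases h1 : J = i
    · subst h1; simp [h]
    · by_cases h2 : J = j
      · subst h2; simp [h1]
      · simp [h1, h2]
  rw [tsum_congr hc, ENNReal.tsum_add, tsum_ite_eq, tsum_ite_eq]

noncomputable def barrier (m s : ℕ) : ℝ := 2^(m+1) - 2^(m+1 - min s (m+1))

lemma barrier_zero (m : ℕ) : barrier m 0 = 0 := by simp [barrier]

lemma barrier_nonneg (m s : ℕ) : 0 ≤ barrier m s := by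
  have : (2:ℝ)^(m+1 - min s (m+1)) ≤ 2^(m+1) :=
    pow_le_pow_right₀ one_le_two (by omega)
  simp [barrier]; linarith

lemma barrier_le (m s : ℕ) : barrier m s ≤ 2^(m+1) :=
  sub_le_self _ (by positivity)

lemma barrier_one (m : ℕ) : barrier m 1 = 2^m := by
  have h1 : min 1 (m+1) = 1 := by omega
  have h2 : m + 1 - 1 = m := by omega
  rw [barrier, h1, h2, pow_succ]
  ring

lemma barrier_key (m s : ℕ) (b : ℝ) (hb : 0 ≤ b) (hs : 1 ≤ s)
    (hb2 : s ≤ m → 2*(s:ℝ) ≤ b) :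
    barrier m s * (b + s) ≤ (b + s) + b * barrier m (s+1) + s * barrier m (s-1) := by
  have hsr : (1:ℝ) ≤ (s:ℝ) := by exact_mod_cast hs
  rcases le_or_gt s m with hsm | hsm
  · -- s ≤ m
    have e1 : min s (m+1) = s := by omega
    have e2 : min (s+1) (m+1) = s+1 := by omega
    have e3 : min (s-1) (m+1) = s-1 := by omega
    have e4 : m+1-s = (m-s)+1 := by omega
    have e5 : m+1-(s+1) = m-s := by omega
    have e6 : m+1-(s-1) = (m-s)+2 := by omega
    set X : ℝ := 2^(m-s) with hX
    have hXpos : (0:ℝ) < X := by positivity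
    have B1 : barrier m s = 2^(m+1) - 2*X := by
      rw [barrier, e1, e4, pow_succ]; ring
    have B2 : barrier m (s+1) = 2^(m+1) - X := by rw [barrier, e2, e5]
    have B3 : barrier m (s-1) = 2^(m+1) - 4*X := by
      rw [barrier, e3, e6, pow_add]; ring
    have hbs : 2*(s:ℝ) ≤ b := hb2 hsm
    rw [B1, B2, B3]
    nlinarith [mul_nonneg hXpos.le (sub_nonneg.mpr hbs)]
  · rcases eq_or_lt_of_le (Nat.succ_le_of_lt hsm) with hsm1 | hsm1
    · -- s = m + 1
      have e1 : min s (m+1) = m+1 := by omega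
      have e2 : min (s+1) (m+1) = m+1 := by omega
      have e3 : min (s-1) (m+1) = m := by omega
      have e4 : m+1-(m+1) = 0 := by omega
      have e5 : m+1-m = 1 := by omega
      have B1 : barrier m s = 2^(m+1) - 1 := by rw [barrier, e1, e4, pow_zero]
      have B2 : barrier m (s+1) = 2^(m+1) - 1 := by rw [barrier, e2, e4, pow_zero]
      have B3 : barrier m (s-1) = 2^(m+1) - 2 := by rw [barrier, e3, e5, pow_one]
      rw [B1, B2, B3]
      nlinarith
    · -- s ≥ m + 2
      have e1 : min s (m+1) = m+1 := by omega
      have e2 : min (s+1) (m+1) = m+1 := by omega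
      have e3 : min (s-1) (m+1) = m+1 := by omega
      have e4 : m+1-(m+1) = 0 := by omega
      have B1 : barrier m s = 2^(m+1) - 1 := by rw [barrier, e1, e4, pow_zero]
      have B2 : barrier m (s+1) = 2^(m+1) - 1 := by rw [barrier, e2, e4, pow_zero]
      have B3 : barrier m (s-1) = 2^(m+1) - 1 := by rw [barrier, e3, e4, pow_zero]
      rw [B1, B2, B3]
      nlinarith

lemma clique_basic (n : ℕ) (lam alpha : ℝ) (hlam : 0 < lam) (s : ℕ)
    (hs0 : s ≠ 0) (hsn : s ≤ n) :
    0 ≤ lam * (s:ℝ)^(1+alpha) * ((n:ℝ) - s) ∧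
      (0:ℝ) < lam * (s:ℝ)^(1+alpha) * ((n:ℝ) - s) + s := by
  have hsr : (1:ℝ) ≤ s := by exact_mod_cast Nat.one_le_iff_ne_zero.mpr hs0
  have hns : (s:ℝ) ≤ n := by exact_mod_cast hsn
  have hb : 0 ≤ lam * (s:ℝ)^(1+alpha) * ((n:ℝ) - s) := by
    apply mul_nonneg (mul_nonneg hlam.le (Real.rpow_nonneg (by positivity) _))
    linarith
  exact ⟨hb, by linarith⟩

lemma cliqueStep_row (n : ℕ) (lam alpha : ℝ) (hlam : 0 < lam) (s : ℕ) :
    ∑' J, cliqueStep n lam alpha s J ≤ 1 := by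
  by_cases h : s = 0 ∨ n < s
  · rw [cliqueStep, if_pos h, tsum_ite_eq]
  · push_neg at h
    obtain ⟨hs0, hsn⟩ := h
    obtain ⟨hb, hD⟩ := clique_basic n lam alpha hlam s hs0 hsn
    set b := lam * (s:ℝ)^(1+alpha) * ((n:ℝ) - s) with hbdef
    have hx : ¬(s = 0 ∨ n < s) := by omega
    have h2 := twoPoint_tsum (i := s+1) (j := s-1) (by omega)
      (ENNReal.ofReal (b / (b+s))) (ENNReal.ofReal ((s:ℝ) / (b+s))) (fun _ => 1)
    simp only [mul_one] at h2
    simp only [cliqueStep, if_neg hx]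
    rw [h2]
    have hsnn : (0:ℝ) ≤ s := by positivity
    rw [← ENNReal.ofReal_add (div_nonneg hb hD.le) (div_nonneg hsnn hD.le),
      ← add_div, div_self hD.ne']
    simp

lemma clique_hstep (n m : ℕ) (lam alpha : ℝ) (hlam : 0 < lam)
    (hcond : ∀ s : ℕ, 1 ≤ s → s ≤ m → s ≤ n →
      2*(s:ℝ) ≤ lam * (s:ℝ)^(1+alpha) * ((n:ℝ) - s)) :
    ∀ s, ENNReal.ofReal (barrier m s) ≤ (if s = 0 then 0 else 1) +
      ∑' J, cliqueStep n lam alpha s J * ENNReal.ofReal (barrier m J) := by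
  intro s
  by_cases h : s = 0 ∨ n < s
  · rw [cliqueStep, if_pos h, delta_tsum]
    exact le_add_self
  · push_neg at h
    obtain ⟨hs0, hsn⟩ := h
    have hs1 : 1 ≤ s := Nat.one_le_iff_ne_zero.mpr hs0
    obtain ⟨hb, hD⟩ := clique_basic n lam alpha hlam s hs0 hsn
    set b := lam * (s:ℝ)^(1+alpha) * ((n:ℝ) - s) with hbdef
    have hx : ¬(s = 0 ∨ n < s) := by omega
    simp only [cliqueStep, if_neg hx, if_neg hs0]
    rw [twoPoint_tsum (i := s+1) (j := s-1) (by omega)]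
    have hsnn : (0:ℝ) ≤ s := by positivity
    rw [← ENNReal.ofReal_mul (div_nonneg hb hD.le),
      ← ENNReal.ofReal_mul (div_nonneg hsnn hD.le),
      ← ENNReal.ofReal_add (mul_nonneg (div_nonneg hb hD.le) (barrier_nonneg m (s+1)))
        (mul_nonneg (div_nonneg hsnn hD.le) (barrier_nonneg m (s-1))),
      ← ENNReal.ofReal_one,
      ← ENNReal.ofReal_add zero_le_one
        (add_nonneg (mul_nonneg (div_nonneg hb hD.le) (barrier_nonneg m (s+1)))
          (mul_nonneg (div_nonneg hsnn hD.le) (barrier_nonneg m (s-1))))]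
    apply ENNReal.ofReal_le_ofReal
    have key := barrier_key m s b hb hs1 (fun hsm => hcond s hs1 hsm hsn)
    have heq : 1 + (b/(b+(s:ℝ)) * barrier m (s+1) + (s:ℝ)/(b+(s:ℝ)) * barrier m (s-1))
        = ((b+(s:ℝ)) + b*barrier m (s+1) + (s:ℝ)*barrier m (s-1))/(b+(s:ℝ)) := by
      field_simp
      ring
    rw [heq, le_div_iff₀ hD]
    exact key

/-- For sub-linear scaling with λ ∈ ω(log(n)^{-α}/n), the expected
survival time of the clique infection chain is super-polynomial in n. -/
theorem clique_sublinear_superpolynomial (alpha : ℝ) (ha1 : -1 < alpha) (ha2 : alpha < 0)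
    (lam : ℕ → ℝ) (hpos : ∀ n, 0 < lam n)
    (hcond : Tendsto (fun n : ℕ => lam n * n * Real.log n ^ alpha) atTop atTop) :
    ∀ k : ℕ, ∀ M : ℝ, ∀ᶠ n : ℕ in atTop,
      ENNReal.ofReal (M * (n : ℝ) ^ k) ≤ cliqueET n (lam n) alpha 1 := by
  intro k M
  have hlog2 : (0:ℝ) < Real.log 2 := Real.log_pos one_lt_two
  set C : ℝ := ((k:ℝ)+1) * (1/Real.log 2 + 1) with hCdef
  have hCpos : 0 < C := by positivity
  have hCa : (0:ℝ) < C ^ alpha := Real.rpow_pos_of_pos hCpos _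
  have hev1 : ∀ᶠ n : ℕ in atTop, (max ⌈M⌉₊ 1) ≤ n := eventually_ge_atTop _
  have hev2 : ∀ᶠ n : ℕ in atTop, 1 ≤ Real.log n :=
    tendsto_natCast_atTop_atTop.eventually
      (Real.tendsto_log_atTop.eventually_ge_atTop 1)
  have hev3 : ∀ᶠ n : ℕ in atTop, ‖Real.log n‖ ≤ (1/(4*C)) * ‖(n:ℝ)‖ :=
    tendsto_natCast_atTop_atTop.eventually
      (Real.isLittleO_log_id_atTop.def (by positivity))
  have hev4 : ∀ᶠ n : ℕ in atTop, 4 / C^alpha ≤ lam n * n * Real.log n ^ alpha :=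
    hcond.eventually_ge_atTop _
  filter_upwards [hev1, hev2, hev3, hev4] with n hn1 hn2 hn3 hn4
  have hn1' : 1 ≤ n := le_trans (le_max_right _ _) hn1
  have hnR : (1:ℝ) ≤ n := by exact_mod_cast hn1'
  have hM : M ≤ (n:ℝ) := by
    refine le_trans (Nat.le_ceil M) ?_
    exact_mod_cast le_trans (le_max_left _ _) hn1
  have hlogpos : (0:ℝ) ≤ Real.log n := by linarith
  have hlogn : Real.log n ≤ (1/(4*C)) * n := by
    rwa [Real.norm_eq_abs, Real.norm_eq_abs, abs_of_nonneg hlogpos,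
      abs_of_nonneg (by linarith : (0:ℝ) ≤ (n:ℝ))] at hn3
  set m := (k+1) * (Nat.log 2 n + 1) with hmdef
  have hm1 : 1 ≤ m := Nat.one_le_iff_ne_zero.mpr (by positivity)
  have hmR : (1:ℝ) ≤ m := by exact_mod_cast hm1
  -- m ≤ C * log n
  have hL : (Nat.log 2 n : ℝ) ≤ Real.log n / Real.log 2 := by
    rw [le_div_iff₀ hlog2]
    have hp : ((2:ℝ))^(Nat.log 2 n) ≤ (n:ℝ) := by
      exact_mod_cast Nat.pow_log_le_self 2 (by omega)
    have := (Real.log_le_log_iff (by positivity) (by linarith)).mpr hp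
    rwa [Real.log_pow] at this
  have hmC : (m:ℝ) ≤ C * Real.log n := by
    have hcast : (m:ℝ) = ((k:ℝ)+1) * ((Nat.log 2 n : ℝ)+1) := by
      rw [hmdef]; push_cast; ring
    calc (m:ℝ) = ((k:ℝ)+1) * ((Nat.log 2 n : ℝ)+1) := hcast
      _ ≤ ((k:ℝ)+1) * (Real.log n / Real.log 2 + Real.log n) := by
          have hk : (0:ℝ) ≤ (k:ℝ)+1 := by positivity
          apply mul_le_mul_of_nonneg_left _ hk
          linarith
      _ = C * Real.log n := by rw [hCdef]; ring
  have hm4 : (m:ℝ) ≤ (n:ℝ)/4 := by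
    calc (m:ℝ) ≤ C * Real.log n := hmC
      _ ≤ C * ((1/(4*C)) * n) := by
          exact mul_le_mul_of_nonneg_left hlogn hCpos.le
      _ = (n:ℝ)/4 := by field_simp
  -- the drift condition
  have hb2 : ∀ s : ℕ, 1 ≤ s → s ≤ m → s ≤ n →
      2*(s:ℝ) ≤ lam n * (s:ℝ)^(1+alpha) * ((n:ℝ) - s) := by
    intro s hs1 hsm hsn
    have hsR : (1:ℝ) ≤ (s:ℝ) := by exact_mod_cast hs1
    have hspos : (0:ℝ) < s := by linarith
    have hsmR : (s:ℝ) ≤ (m:ℝ) := by exact_mod_cast hsm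
    have hns : (n:ℝ)/2 ≤ (n:ℝ) - s := by linarith
    have hrs : (s:ℝ)^(1+alpha) = s * (s:ℝ)^alpha := by
      rw [Real.rpow_add hspos, Real.rpow_one]
    have hsa : (m:ℝ)^alpha ≤ (s:ℝ)^alpha :=
      Real.rpow_le_rpow_of_nonpos hspos hsmR ha2.le
    have hma : (C*Real.log n)^alpha ≤ (m:ℝ)^alpha :=
      Real.rpow_le_rpow_of_nonpos (by linarith) hmC ha2.le
    have hmul : (C*Real.log n)^alpha = C^alpha * Real.log n^alpha :=
      Real.mul_rpow hCpos.le hlogpos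
    have h1 : C^alpha * Real.log n^alpha ≤ (s:ℝ)^alpha := by
      rw [← hmul]; exact le_trans hma hsa
    have hlnn : (0:ℝ) ≤ Real.log n ^ alpha := Real.rpow_nonneg hlogpos _
    have h2 : lam n * (C^alpha * Real.log n^alpha) * ((n:ℝ)/2)
        ≤ lam n * (s:ℝ)^alpha * ((n:ℝ) - s) := by
      have hlam := (hpos n).le
      apply mul_le_mul (mul_le_mul_of_nonneg_left h1 hlam) hns (by positivity)
      exact mul_nonneg hlam (Real.rpow_nonneg hspos.le _)
    have h4 : (2:ℝ) ≤ lam n * (C^alpha * Real.log n^alpha) * ((n:ℝ)/2) := by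
      have heq : lam n * (C^alpha * Real.log n^alpha) * ((n:ℝ)/2)
          = (C^alpha/2) * (lam n * n * Real.log n^alpha) := by ring
      rw [heq]
      calc (2:ℝ) = (C^alpha/2) * (4/C^alpha) := by field_simp; ring
        _ ≤ (C^alpha/2) * (lam n * n * Real.log n^alpha) :=
            mul_le_mul_of_nonneg_left hn4 (by positivity)
    calc 2*(s:ℝ) = (s:ℝ) * 2 := by ring
      _ ≤ (s:ℝ) * (lam n * (C^alpha * Real.log n^alpha) * ((n:ℝ)/2)) :=
          mul_le_mul_of_nonneg_left h4 hspos.le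
      _ ≤ (s:ℝ) * (lam n * (s:ℝ)^alpha * ((n:ℝ) - s)) :=
          mul_le_mul_of_nonneg_left h2 hspos.le
      _ = lam n * (s:ℝ)^(1+alpha) * ((n:ℝ) - s) := by rw [hrs]; ring
  -- the power bound
  have hpow : M * (n:ℝ)^k + 1 ≤ 2^m := by
    have hnat : (n+1)^(k+1) ≤ 2^m := by
      have h0 : n+1 ≤ 2^(Nat.log 2 n + 1) :=
        Nat.succ_le_of_lt (Nat.lt_pow_succ_log_self one_lt_two n)
      calc (n+1)^(k+1) ≤ (2^(Nat.log 2 n + 1))^(k+1) := Nat.pow_le_pow_left h0 _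
        _ = 2^m := by rw [← pow_mul, hmdef, Nat.mul_comm]
    have hr : ((n:ℝ)+1)^(k+1) ≤ (2:ℝ)^m := by exact_mod_cast hnat
    have hk1 : (1:ℝ) ≤ (n:ℝ)^k := one_le_pow₀ hnR
    have hp2 : (n:ℝ)^k * ((n:ℝ)+1) ≤ ((n:ℝ)+1)^(k+1) := by
      rw [pow_succ]
      apply mul_le_mul_of_nonneg_right _ (by linarith)
      exact pow_le_pow_left₀ (by linarith) (by linarith) k
    have hMk : M * (n:ℝ)^k ≤ (n:ℝ) * (n:ℝ)^k :=
      mul_le_mul_of_nonneg_right hM (by positivity)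
    nlinarith
  -- apply the main machinery
  have main := survival_lower (cliqueStep n (lam n) alpha) 1
    (cliqueStep_row n (lam n) alpha (hpos n))
    (fun s => ENNReal.ofReal (barrier m s)) (by simp [barrier_zero])
    (ENNReal.ofReal (2^(m+1))) ENNReal.ofReal_ne_top
    (fun s => ENNReal.ofReal_le_ofReal (barrier_le m s))
    (clique_hstep n m (lam n) alpha (hpos n) hb2)
  have main' : ENNReal.ofReal ((2:ℝ)^m) ≤ 1 + cliqueET n (lam n) alpha 1 := by
    rw [← barrier_one m]
    exact main
  have h2m1 : (1:ℝ) ≤ (2:ℝ)^m := one_le_pow₀ one_le_two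
  have step1 : ENNReal.ofReal (M * (n:ℝ)^k) + 1 ≤ ENNReal.ofReal ((2:ℝ)^m) := by
    have e1 : ENNReal.ofReal ((2:ℝ)^m) = ENNReal.ofReal ((2:ℝ)^m - 1) + 1 := by
      rw [← ENNReal.ofReal_one, ← ENNReal.ofReal_add (by linarith) zero_le_one]
      norm_num
    rw [e1]
    exact add_le_add_left (ENNReal.ofReal_le_ofReal (by linarith)) 1
  have final := le_trans step1 main'
  rw [add_comm 1 (cliqueET n (lam n) alpha 1)] at final
  exact (ENNReal.add_le_add_iff_right ENNReal.one_ne_top).mp final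
end

section
/- Let α ∈ (−1,0) be fixed and let c > 0. There exists a constant C depending only on α and c such that for every integer n ≥ 1 and every λ > 0 with λn ≤ c, the clique infection chain on {0,…,n} with parameters λ, α, started at X₀ = 1, has expected survival time E[T] ≤ C. In particular, if λ(n)·n = O(1) then E[T_n] = O(1). -/
open scoped ENNReal
open Filter Asymptotics

/-! ### Auxiliary Lyapunov function -/

noncomputable def eAux (c alpha : ℝ) (I0 : ℕ) : ℕ → ℝ
  | 0 => 2
  | k+1 => c * ((I0 - (k+1) : ℕ) : ℝ) ^ alpha * eAux c alpha I0 k + 1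

noncomputable def dAux (c alpha : ℝ) (I0 I : ℕ) : ℝ :=
  if I0 ≤ I then 2 else eAux c alpha I0 (I0 - I)

noncomputable def fAux (c alpha : ℝ) (I0 : ℕ) : ℕ → ℝ
  | 0 => 0
  | I+1 => fAux c alpha I0 I + dAux c alpha I0 (I+1)

lemma eAux_one_le (c alpha : ℝ) (I0 : ℕ) (hc : 0 ≤ c) (k : ℕ) : 1 ≤ eAux c alpha I0 k := by
  induction k with
  | zero => norm_num [eAux]
  | succ k ih =>
    have : 0 ≤ c * ((I0 - (k+1) : ℕ) : ℝ) ^ alpha * eAux c alpha I0 k := by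
      positivity
    simp only [eAux]; linarith

lemma dAux_one_le (c alpha : ℝ) (I0 I : ℕ) (hc : 0 ≤ c) : 1 ≤ dAux c alpha I0 I := by
  unfold dAux
  split
  · norm_num
  · exact eAux_one_le c alpha I0 hc _

lemma fAux_nonneg (c alpha : ℝ) (I0 : ℕ) (hc : 0 ≤ c) (I : ℕ) : 0 ≤ fAux c alpha I0 I := by
  induction I with
  | zero => simp [fAux]
  | succ I ih =>
    have := dAux_one_le c alpha I0 (I+1) hc
    simp only [fAux]; linarith

lemma dAux_drift (c alpha : ℝ) (I0 : ℕ) (hc : 0 < c)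
    (hI0 : ∀ s : ℕ, I0 ≤ s → c * (s : ℝ) ^ alpha ≤ 1/2) (I : ℕ) (hI : 1 ≤ I) :
    c * (I : ℝ) ^ alpha * dAux c alpha I0 (I+1) + 1 ≤ dAux c alpha I0 I := by
  by_cases h : I0 ≤ I
  · have h1 : dAux c alpha I0 I = 2 := by simp [dAux, h]
    have h2 : dAux c alpha I0 (I+1) = 2 := by simp [dAux, Nat.le_succ_of_le h]
    have := hI0 I h
    rw [h1, h2]; linarith
  · push_neg at h
    have h1 : dAux c alpha I0 I = eAux c alpha I0 (I0 - I) := by simp [dAux, not_le.mpr h]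
    have hk : I0 - I = (I0 - I - 1) + 1 := by omega
    have hI' : I0 - ((I0 - I - 1) + 1) = I := by omega
    have h2 : eAux c alpha I0 ((I0 - I - 1) + 1)
        = c * (I : ℝ) ^ alpha * eAux c alpha I0 (I0 - I - 1) + 1 := by
      rw [eAux, hI']
    have h3 : eAux c alpha I0 (I0 - I - 1) = dAux c alpha I0 (I+1) := by
      by_cases h' : I0 ≤ I + 1
      · have : I0 - I - 1 = 0 := by omega
        rw [this]; simp [eAux, dAux, h']
      · have : I0 - I - 1 = I0 - (I+1) := by omega
        rw [this]; simp [dAux, h']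
    rw [h1, hk, h2, h3]

lemma div_combine (b s C ds ds1 del : ℝ) (hden : 0 < b + s)
    (key2 : b * (C + ds1) + s * (C - ds) + del * (b + s) ≤ C * (b + s)) :
    b/(b+s) * (C + ds1) + s/(b+s) * (C - ds) + del ≤ C := by
  have h : b/(b+s) * (C + ds1) + s/(b+s) * (C - ds) + del
      = (b * (C + ds1) + s * (C - ds) + del * (b+s)) / (b+s) := by
    field_simp
  rw [h]
  rw [div_le_iff₀ hden]
  linarith [key2]

lemma real_drift (c alpha : ℝ) (I0 : ℕ) (hc : 0 < c) (ha2 : alpha < 0)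
    (hI0 : ∀ s : ℕ, I0 ≤ s → c * (s : ℝ) ^ alpha ≤ 1/2)
    (n : ℕ) (lam : ℝ) (hlam : 0 < lam) (hln : lam * n ≤ c)
    (m : ℕ) (hsn : m + 1 ≤ n) :
    (lam * ((m+1 : ℕ) : ℝ) ^ (1 + alpha) * ((n : ℝ) - (m+1 : ℕ))) /
      ((lam * ((m+1 : ℕ) : ℝ) ^ (1 + alpha) * ((n : ℝ) - (m+1 : ℕ))) + (m+1 : ℕ)) *
      fAux c alpha I0 (m+2)
    + ((m+1 : ℕ) : ℝ) /
      ((lam * ((m+1 : ℕ) : ℝ) ^ (1 + alpha) * ((n : ℝ) - (m+1 : ℕ))) + (m+1 : ℕ)) *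
      fAux c alpha I0 m
    + 1/(c+1) ≤ fAux c alpha I0 (m+1) := by
  set s : ℕ := m + 1 with hsdef
  set b : ℝ := lam * (s : ℝ) ^ (1 + alpha) * ((n : ℝ) - s) with hbdef
  have hs0 : (0:ℝ) < s := by positivity
  have hs1 : (1:ℝ) ≤ s := by exact_mod_cast Nat.one_le_iff_ne_zero.mpr (by omega)
  have hsn' : (s:ℝ) ≤ n := by exact_mod_cast hsn
  have hb0 : 0 ≤ b := by
    apply mul_nonneg (mul_nonneg hlam.le (Real.rpow_nonneg hs0.le _))
    linarith
  have hden : 0 < b + s := by linarith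
  have hc1 : (0:ℝ) < c + 1 := by linarith
  have hsalpha : (s:ℝ) ^ alpha ≤ 1 :=
    Real.rpow_le_one_of_one_le_of_nonpos hs1 ha2.le
  have hsalpha0 : 0 ≤ (s:ℝ) ^ alpha := Real.rpow_nonneg hs0.le _
  have hrs : (s:ℝ) ^ (1 + alpha) = s * (s:ℝ) ^ alpha := by
    rw [Real.rpow_add hs0, Real.rpow_one]
  have hbc1 : b ≤ s * (c * (s:ℝ) ^ alpha) := by
    have h1 : b ≤ (lam * n) * ((s:ℝ) ^ (1 + alpha)) := by
      rw [hbdef]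
      have : 0 ≤ lam * (s:ℝ) ^ (1 + alpha) := by positivity
      nlinarith [Real.rpow_nonneg hs0.le (1+alpha)]
    calc b ≤ (lam * n) * ((s:ℝ) ^ (1 + alpha)) := h1
      _ ≤ c * ((s:ℝ) ^ (1 + alpha)) := by
          apply mul_le_mul_of_nonneg_right hln (Real.rpow_nonneg hs0.le _)
      _ = s * (c * (s:ℝ) ^ alpha) := by rw [hrs]; ring
  have hbs : b ≤ c * s := by
    have h := mul_le_mul_of_nonneg_left hsalpha (mul_nonneg hc.le hs0.le)
    nlinarith
  set ds : ℝ := dAux c alpha I0 s with hds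
  set ds1 : ℝ := dAux c alpha I0 (s+1) with hds1
  have hds1nn : 0 ≤ ds1 := by linarith [dAux_one_le c alpha I0 (s+1) hc.le]
  have key := dAux_drift c alpha I0 hc hI0 s (by omega)
  have hfs1 : fAux c alpha I0 (s+1) = fAux c alpha I0 s + ds1 := rfl
  have hfs : fAux c alpha I0 s = fAux c alpha I0 m + ds := rfl
  set C : ℝ := fAux c alpha I0 s with hC
  have e1 : (b+s)/(c+1) ≤ s := by rw [div_le_iff₀ hc1]; nlinarith
  have e2 : b * ds1 ≤ s * (c * (s:ℝ)^alpha * ds1) := by nlinarith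
  have e3 : (s:ℝ) * (c * (s:ℝ)^alpha * ds1) + s ≤ s * ds := by nlinarith
  have key2 : b * (C + ds1) + s * (C - ds) + (1/(c+1)) * (b+s) ≤ C * (b+s) := by
    have : (1/(c+1)) * (b+s) = (b+s)/(c+1) := by ring
    nlinarith
  have hB : fAux c alpha I0 m = C - ds := by rw [hfs]; ring
  show b/(b+s) * (C + ds1) + (s:ℝ)/(b+s) * fAux c alpha I0 m + 1/(c+1) ≤ C
  rw [hB]
  exact div_combine b s C ds ds1 (1/(c+1)) hden key2

/-! ### Chain basics -/

lemma tsum_two (s : ℕ) (hs : 1 ≤ s) (p q : ℝ≥0∞) (g : ℕ → ℝ≥0∞) :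
    ∑' J : ℕ, (if J = s + 1 then p else if J = s - 1 then q else 0) * g J
      = p * g (s+1) + q * g (s-1) := by
  rw [tsum_eq_sum (s := {s+1, s-1}) (by
    intro b hb
    simp only [Finset.mem_insert, Finset.mem_singleton] at hb
    push_neg at hb
    rw [if_neg hb.1, if_neg hb.2, zero_mul])]
  rw [Finset.sum_pair (by omega : s + 1 ≠ s - 1)]
  rw [if_pos rfl, if_neg (by omega), if_pos rfl]

lemma tsum_delta (s0 : ℕ) (g : ℕ → ℝ≥0∞) :
    ∑' J : ℕ, (if J = s0 then (1:ℝ≥0∞) else 0) * g J = g s0 := by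
  have h : ∀ J, (if J = s0 then (1:ℝ≥0∞) else 0) * g J = if J = s0 then g s0 else 0 := by
    intro J; split
    · rename_i hJ; rw [hJ, one_mul]
    · rw [zero_mul]
  simp_rw [h]
  exact tsum_ite_eq s0 (fun _ => g s0)

lemma cliqueStep_eq (n : ℕ) (lam alpha : ℝ) (s : ℕ) (hs : 1 ≤ s) (hsn : s ≤ n) :
    cliqueStep n lam alpha s = fun J =>
      if J = s + 1 then
        ENNReal.ofReal (lam * (s : ℝ) ^ (1 + alpha) * ((n : ℝ) - s) /
          (lam * (s : ℝ) ^ (1 + alpha) * ((n : ℝ) - s) + s))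
      else if J = s - 1 then
        ENNReal.ofReal ((s : ℝ) /
          (lam * (s : ℝ) ^ (1 + alpha) * ((n : ℝ) - s) + s))
      else 0 := by
  unfold cliqueStep
  rw [if_neg (by omega)]

lemma row_sum (n : ℕ) (lam alpha : ℝ) (hlam : 0 < lam) (s : ℕ) :
    ∑' J : ℕ, cliqueStep n lam alpha s J = 1 := by
  by_cases h : s = 0 ∨ n < s
  · unfold cliqueStep
    rw [if_pos h]
    exact tsum_ite_eq s 1
  · push_neg at h
    have hs : 1 ≤ s := by omega
    have hsn : s ≤ n := by omega
    have h1 : ∑' J : ℕ, cliqueStep n lam alpha s J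
        = ∑' J : ℕ, cliqueStep n lam alpha s J * (fun _ : ℕ => (1:ℝ≥0∞)) J := by
      simp
    rw [h1, cliqueStep_eq n lam alpha s hs hsn, tsum_two s hs]
    set b : ℝ := lam * (s : ℝ) ^ (1 + alpha) * ((n : ℝ) - s) with hb
    have hs0 : (0:ℝ) < s := by positivity
    have hb0 : 0 ≤ b := by
      apply mul_nonneg (mul_nonneg hlam.le (Real.rpow_nonneg hs0.le _))
      have : (s:ℝ) ≤ n := by exact_mod_cast hsn
      linarith
    have hden : 0 < b + s := by linarith
    rw [mul_one, mul_one, ← ENNReal.ofReal_add (by positivity) (by positivity)]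
    rw [← add_div, div_self hden.ne']
    exact ENNReal.ofReal_one

lemma clique_support (n : ℕ) (lam alpha : ℝ) (hn : 1 ≤ n) (t : ℕ) :
    ∀ I : ℕ, n < I → markovDist (cliqueStep n lam alpha) 1 t I = 0 := by
  induction t with
  | zero =>
    intro I hI
    simp only [markovDist]
    rw [if_neg (by omega)]
  | succ t ih =>
    intro I hI
    simp only [markovDist]
    rw [ENNReal.tsum_eq_zero]
    intro s
    by_cases hs : n < s
    · rw [ih s hs, zero_mul]
    · push_neg at hs
      have hstep : cliqueStep n lam alpha s I = 0 := by
        by_cases h0 : s = 0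
        · unfold cliqueStep
          rw [if_pos (Or.inl h0)]
          exact if_neg (by omega)
        · rw [cliqueStep_eq n lam alpha s (by omega) hs]
          beta_reduce
          by_cases h1 : I = s + 1
          · have hsn : (n:ℝ) - (s:ℝ) = 0 := by
              have : s = n := by omega
              rw [this, sub_self]
            rw [if_pos h1, hsn, mul_zero, zero_div, ENNReal.ofReal_zero]
          · rw [if_neg h1, if_neg (by omega)]
      rw [hstep, mul_zero]

lemma clique_mass (n : ℕ) (lam alpha : ℝ) (hlam : 0 < lam) (t : ℕ) :
    ∑' I : ℕ, markovDist (cliqueStep n lam alpha) 1 t I = 1 := by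
  induction t with
  | zero => exact tsum_ite_eq 1 1
  | succ t ih =>
    simp only [markovDist]
    rw [ENNReal.tsum_comm]
    calc ∑' s : ℕ, ∑' J : ℕ,
          markovDist (cliqueStep n lam alpha) 1 t s * cliqueStep n lam alpha s J
        = ∑' s : ℕ, markovDist (cliqueStep n lam alpha) 1 t s *
            ∑' J : ℕ, cliqueStep n lam alpha s J := by
          congr 1; funext s; rw [ENNReal.tsum_mul_left]
      _ = 1 := by
          simp_rw [row_sum n lam alpha hlam]
          simpa using ih

/-! ### Drift in ℝ≥0∞ -/

lemma state_drift (c alpha : ℝ) (I0 n : ℕ) (lam : ℝ) (hc : 0 < c) (ha2 : alpha < 0)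
    (hI0 : ∀ s : ℕ, I0 ≤ s → c * (s : ℝ) ^ alpha ≤ 1/2)
    (hlam : 0 < lam) (hln : lam * n ≤ c) (s : ℕ) (hsn : s ≤ n) :
    (∑' J : ℕ, cliqueStep n lam alpha s J * ENNReal.ofReal (fAux c alpha I0 J))
      + (if s = 0 then 0 else ENNReal.ofReal (1/(c+1)))
    ≤ ENNReal.ofReal (fAux c alpha I0 s) := by
  match s with
  | 0 =>
    have : cliqueStep n lam alpha 0 = fun J => if J = 0 then 1 else 0 := by
      unfold cliqueStep; rw [if_pos (Or.inl rfl)]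
    rw [this, tsum_delta, if_pos rfl, add_zero]
  | m+1 =>
    have hs : 1 ≤ m + 1 := by omega
    rw [cliqueStep_eq n lam alpha (m+1) hs hsn]
    rw [if_neg (by omega)]
    have := tsum_two (m+1) hs
      (ENNReal.ofReal (lam * ((m+1:ℕ) : ℝ) ^ (1 + alpha) * ((n : ℝ) - (m+1:ℕ)) /
          (lam * ((m+1:ℕ) : ℝ) ^ (1 + alpha) * ((n : ℝ) - (m+1:ℕ)) + (m+1:ℕ))))
      (ENNReal.ofReal (((m+1:ℕ) : ℝ) /
          (lam * ((m+1:ℕ) : ℝ) ^ (1 + alpha) * ((n : ℝ) - (m+1:ℕ)) + (m+1:ℕ))))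
      (fun J => ENNReal.ofReal (fAux c alpha I0 J))
    rw [this]
    set b : ℝ := lam * ((m+1:ℕ) : ℝ) ^ (1 + alpha) * ((n : ℝ) - (m+1:ℕ)) with hb
    have hs0 : (0:ℝ) < ((m+1:ℕ):ℝ) := by positivity
    have hb0 : 0 ≤ b := by
      apply mul_nonneg (mul_nonneg hlam.le (Real.rpow_nonneg hs0.le _))
      have : ((m+1:ℕ):ℝ) ≤ n := by exact_mod_cast hsn
      linarith
    have hden : 0 < b + ((m+1:ℕ):ℝ) := by linarith
    have hp0 : 0 ≤ b / (b + ((m+1:ℕ):ℝ)) := by positivity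
    have hq0 : 0 ≤ ((m+1:ℕ):ℝ) / (b + ((m+1:ℕ):ℝ)) := by positivity
    have hf1 : 0 ≤ fAux c alpha I0 (m+1+1) := fAux_nonneg c alpha I0 hc.le _
    have hf2 : 0 ≤ fAux c alpha I0 (m+1-1) := fAux_nonneg c alpha I0 hc.le _
    rw [← ENNReal.ofReal_mul hp0, ← ENNReal.ofReal_mul hq0,
      ← ENNReal.ofReal_add (mul_nonneg hp0 hf1) (mul_nonneg hq0 hf2),
      ← ENNReal.ofReal_add (add_nonneg (mul_nonneg hp0 hf1) (mul_nonneg hq0 hf2))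
        (by positivity : (0:ℝ) ≤ 1/(c+1))]
    apply ENNReal.ofReal_le_ofReal
    have hdrift := real_drift c alpha I0 hc ha2 hI0 n lam hlam hln m hsn
    have e1 : m + 1 + 1 = m + 2 := rfl
    have e2 : m + 1 - 1 = m := rfl
    rw [e1, e2]
    exact hdrift

lemma step_ineq (c alpha : ℝ) (I0 n : ℕ) (lam : ℝ) (hc : 0 < c) (ha2 : alpha < 0)
    (hI0 : ∀ s : ℕ, I0 ≤ s → c * (s : ℝ) ^ alpha ≤ 1/2)
    (hn : 1 ≤ n) (hlam : 0 < lam) (hln : lam * n ≤ c) (t : ℕ) :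
    (∑' I : ℕ, markovDist (cliqueStep n lam alpha) 1 (t+1) I *
        ENNReal.ofReal (fAux c alpha I0 I))
      + ENNReal.ofReal (1/(c+1)) * (1 - markovDist (cliqueStep n lam alpha) 1 t 0)
    ≤ ∑' I : ℕ, markovDist (cliqueStep n lam alpha) 1 t I *
        ENNReal.ofReal (fAux c alpha I0 I) := by
  set μ : ℕ → ℕ → ℝ≥0∞ := markovDist (cliqueStep n lam alpha) 1 with hμ
  set F : ℕ → ℝ≥0∞ := fun I => ENNReal.ofReal (fAux c alpha I0 I) with hF
  set δ : ℝ≥0∞ := ENNReal.ofReal (1/(c+1)) with hδ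
  have hA : (∑' I : ℕ, μ (t+1) I * F I)
      = ∑' s : ℕ, μ t s * ∑' J : ℕ, cliqueStep n lam alpha s J * F J := by
    have h0 : ∀ I : ℕ, μ (t+1) I = ∑' s : ℕ, μ t s * cliqueStep n lam alpha s I := by
      intro I; rfl
    calc (∑' I : ℕ, μ (t+1) I * F I)
        = ∑' I : ℕ, ∑' s : ℕ, μ t s * cliqueStep n lam alpha s I * F I := by
          congr 1; funext I; rw [h0 I, ENNReal.tsum_mul_right]
      _ = ∑' s : ℕ, ∑' I : ℕ, μ t s * cliqueStep n lam alpha s I * F I :=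
          ENNReal.tsum_comm
      _ = ∑' s : ℕ, μ t s * ∑' J : ℕ, cliqueStep n lam alpha s J * F J := by
          congr 1; funext s
          rw [← ENNReal.tsum_mul_left]
          congr 1; funext I; ring
  have key : ∀ s : ℕ,
      μ t s * (∑' J : ℕ, cliqueStep n lam alpha s J * F J)
        + μ t s * (if s = 0 then 0 else δ) ≤ μ t s * F s := by
    intro s
    by_cases hs : s ≤ n
    · rw [← mul_add]
      exact mul_le_mul_right (state_drift c alpha I0 n lam hc ha2 hI0 hlam hln s hs) _
    · rw [hμ, clique_support n lam alpha hn t s (by omega)]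
      simp
  have h2 : (∑' s : ℕ, μ t s * (∑' J : ℕ, cliqueStep n lam alpha s J * F J))
      + (∑' s : ℕ, μ t s * (if s = 0 then 0 else δ)) ≤ ∑' s : ℕ, μ t s * F s := by
    rw [← ENNReal.tsum_add]
    exact ENNReal.tsum_le_tsum key
  have h3 : δ * (1 - μ t 0) ≤ ∑' s : ℕ, μ t s * (if s = 0 then 0 else δ) := by
    have e : ∀ s : ℕ, μ t s * (if s = 0 then (0:ℝ≥0∞) else δ)
        = δ * (if s = 0 then 0 else μ t s) := by
      intro s; split
      · rw [mul_zero, mul_zero]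
      · ring
    simp_rw [e]
    rw [ENNReal.tsum_mul_left]
    apply mul_le_mul_right
    have hmass : ∑' s : ℕ, μ t s = 1 := clique_mass n lam alpha hlam t
    rw [tsub_le_iff_right]
    have hsplit : ∀ s : ℕ, μ t s
        = (if s = 0 then μ t 0 else 0) + (if s = 0 then 0 else μ t s) := by
      intro s
      by_cases h : s = 0
      · subst h; simp
      · simp [h]
    calc (1:ℝ≥0∞) = ∑' s : ℕ, μ t s := hmass.symm
      _ = (∑' s : ℕ, (if s = 0 then μ t 0 else 0))
          + ∑' s : ℕ, (if s = 0 then 0 else μ t s) := by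
          rw [← ENNReal.tsum_add]; congr 1; funext s; exact hsplit s
      _ = μ t 0 + ∑' s : ℕ, (if s = 0 then 0 else μ t s) := by rw [tsum_ite_eq]
      _ = (∑' s : ℕ, (if s = 0 then 0 else μ t s)) + μ t 0 := add_comm _ _
      _ ≤ (∑' i : ℕ, (if i = 0 then 0 else μ t i)) + μ t 0 := le_rfl
  calc (∑' I : ℕ, μ (t+1) I * F I) + δ * (1 - μ t 0)
      ≤ (∑' s : ℕ, μ t s * ∑' J : ℕ, cliqueStep n lam alpha s J * F J)
        + ∑' s : ℕ, μ t s * (if s = 0 then 0 else δ) := by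
        rw [hA]; exact add_le_add_right h3 _
    _ ≤ ∑' s : ℕ, μ t s * F s := h2

lemma telescope (c alpha : ℝ) (I0 n : ℕ) (lam : ℝ) (hc : 0 < c) (ha2 : alpha < 0)
    (hI0 : ∀ s : ℕ, I0 ≤ s → c * (s : ℝ) ^ alpha ≤ 1/2)
    (hn : 1 ≤ n) (hlam : 0 < lam) (hln : lam * n ≤ c) (t : ℕ) :
    (∑' I : ℕ, markovDist (cliqueStep n lam alpha) 1 t I *
        ENNReal.ofReal (fAux c alpha I0 I))
      + ENNReal.ofReal (1/(c+1)) *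
        (∑ k ∈ Finset.range t, (1 - markovDist (cliqueStep n lam alpha) 1 k 0))
    ≤ ENNReal.ofReal (fAux c alpha I0 1) := by
  induction t with
  | zero =>
    have h0 : ∀ I : ℕ, markovDist (cliqueStep n lam alpha) 1 0 I
        = if I = 1 then 1 else 0 := fun I => rfl
    simp_rw [h0]
    rw [tsum_delta 1 (fun I => ENNReal.ofReal (fAux c alpha I0 I))]
    simp
  | succ t ih =>
    rw [Finset.sum_range_succ, mul_add]
    calc (∑' I : ℕ, markovDist (cliqueStep n lam alpha) 1 (t+1) I *
            ENNReal.ofReal (fAux c alpha I0 I))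
          + (ENNReal.ofReal (1/(c+1)) *
              (∑ k ∈ Finset.range t, (1 - markovDist (cliqueStep n lam alpha) 1 k 0))
            + ENNReal.ofReal (1/(c+1)) * (1 - markovDist (cliqueStep n lam alpha) 1 t 0))
        = ((∑' I : ℕ, markovDist (cliqueStep n lam alpha) 1 (t+1) I *
            ENNReal.ofReal (fAux c alpha I0 I))
            + ENNReal.ofReal (1/(c+1)) * (1 - markovDist (cliqueStep n lam alpha) 1 t 0))
          + ENNReal.ofReal (1/(c+1)) *
              (∑ k ∈ Finset.range t, (1 - markovDist (cliqueStep n lam alpha) 1 k 0)) := by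
          ring
      _ ≤ (∑' I : ℕ, markovDist (cliqueStep n lam alpha) 1 t I *
            ENNReal.ofReal (fAux c alpha I0 I))
          + ENNReal.ofReal (1/(c+1)) *
              (∑ k ∈ Finset.range t, (1 - markovDist (cliqueStep n lam alpha) 1 k 0)) :=
          add_le_add_left (step_ineq c alpha I0 n lam hc ha2 hI0 hn hlam hln t) _
      _ ≤ ENNReal.ofReal (fAux c alpha I0 1) := ih

/-- For sub-linear scaling with λn ≤ c, the expected survival time of
the clique infection chain is bounded by a constant depending only on α and c. -/
theorem clique_sublinear_constant_survival (alpha c : ℝ)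
    (ha1 : -1 < alpha) (ha2 : alpha < 0) (hc : 0 < c) :
    ∃ C : ℝ, ∀ (n : ℕ) (lam : ℝ), 1 ≤ n → 0 < lam → lam * n ≤ c →
      cliqueET n lam alpha 1 ≤ ENNReal.ofReal C := by
  -- choose I0
  have h1 : Tendsto (fun x : ℝ => x ^ alpha) atTop (nhds 0) := by
    have h := tendsto_rpow_neg_atTop (y := -alpha) (by linarith)
    simpa using h
  have h2 : Tendsto (fun s : ℕ => c * (s:ℝ) ^ alpha) atTop (nhds (c * 0)) :=
    (h1.comp tendsto_natCast_atTop_atTop).const_mul c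
  rw [mul_zero] at h2
  have h3 : ∀ᶠ s : ℕ in atTop, c * (s:ℝ) ^ alpha ≤ 1/2 :=
    h2.eventually (eventually_le_nhds (by norm_num))
  obtain ⟨I0, hI0⟩ := eventually_atTop.mp h3
  refine ⟨(c+1) * dAux c alpha I0 1, ?_⟩
  intro n lam hn hlam hln
  set δ : ℝ≥0∞ := ENNReal.ofReal (1/(c+1)) with hδ
  have hc1 : (0:ℝ) < c + 1 := by linarith
  have hδ0 : δ ≠ 0 := by
    rw [hδ]; simp [ENNReal.ofReal_eq_zero]; positivity
  have hδtop : δ ≠ ⊤ := ENNReal.ofReal_ne_top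
  have hbound : ∀ t : ℕ,
      δ * (∑ k ∈ Finset.range t, (1 - markovDist (cliqueStep n lam alpha) 1 k 0))
        ≤ ENNReal.ofReal (fAux c alpha I0 1) := by
    intro t
    refine le_trans ?_ (telescope c alpha I0 n lam hc ha2 hI0 hn hlam hln t)
    exact le_add_self
  have hCδ : δ * ENNReal.ofReal ((c+1) * dAux c alpha I0 1)
      = ENNReal.ofReal (fAux c alpha I0 1) := by
    rw [hδ, ← ENNReal.ofReal_mul (by positivity)]
    congr 1
    have : fAux c alpha I0 1 = fAux c alpha I0 0 + dAux c alpha I0 1 := rfl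
    rw [this]
    show 1/(c+1) * ((c+1) * dAux c alpha I0 1) = 0 + dAux c alpha I0 1
    field_simp
    ring
  show (∑' t : ℕ, (1 - markovDist (cliqueStep n lam alpha) 1 t 0))
      ≤ ENNReal.ofReal ((c+1) * dAux c alpha I0 1)
  rw [ENNReal.tsum_eq_iSup_nat]
  apply iSup_le
  intro t
  rw [← ENNReal.mul_le_mul_iff_right hδ0 hδtop, hCδ]
  exact hbound t
end

section
/- Let α > 0 be fixed and let λ : ℕ → ℝ_{>0} satisfy (λ(n)·n/2)^{−1/α} = o(n) as n → ∞. For each n, consider the clique infection chain on {0,…,n} with parameters λ(n), α, started at X₀ = ⌈(λ(n)n/2)^{−1/α}⌉. Then there exists a constant c > 0 such that for all sufficiently large n, the expected survival time satisfies E[T_n] ≥ 2^{cn}. -/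
open scoped ENNReal
open Filter Asymptotics

lemma markov_mass_le {step : ℕ → ℕ → ℝ≥0∞} (hm : ∀ s, ∑' J, step s J ≤ 1) (x0 : ℕ) :
    ∀ t, ∑' s, markovDist step x0 t s ≤ 1 := by
  intro t
  induction t with
  | zero => simp [markovDist]
  | succ t ih =>
    calc ∑' J, markovDist step x0 (t+1) J
        = ∑' J, ∑' s, markovDist step x0 t s * step s J := by simp [markovDist]
      _ = ∑' s, ∑' J, markovDist step x0 t s * step s J := ENNReal.tsum_comm
      _ = ∑' s, markovDist step x0 t s * ∑' J, step s J := by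
          simp [ENNReal.tsum_mul_left]
      _ ≤ ∑' s, markovDist step x0 t s * 1 :=
          ENNReal.tsum_le_tsum fun s => mul_le_mul_right (hm s) _
      _ ≤ 1 := by simpa using ih

lemma markov_exp_le {step : ℕ → ℕ → ℝ≥0∞} {g : ℕ → ℝ≥0∞} {δ : ℝ≥0∞}
    (hm : ∀ s, ∑' J, step s J ≤ 1)
    (hsup : ∀ s, ∑' J, step s J * g J ≤ g s + δ) (x0 : ℕ) :
    ∀ t, ∑' s, markovDist step x0 t s * g s ≤ g x0 + t * δ := by
  intro t
  induction t with
  | zero =>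
    have : (∑' s, markovDist step x0 0 s * g s) = g x0 := by
      rw [tsum_eq_single x0 (by intro b hb; simp [markovDist, hb])]
      simp [markovDist]
    simp [this]
  | succ t ih =>
    calc ∑' J, markovDist step x0 (t+1) J * g J
        = ∑' J, ∑' s, markovDist step x0 t s * step s J * g J := by
          simp [markovDist, ENNReal.tsum_mul_right]
      _ = ∑' s, ∑' J, markovDist step x0 t s * (step s J * g J) := by
          rw [ENNReal.tsum_comm]; simp [mul_assoc]
      _ = ∑' s, markovDist step x0 t s * ∑' J, step s J * g J := by
          simp [ENNReal.tsum_mul_left]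
      _ ≤ ∑' s, markovDist step x0 t s * (g s + δ) :=
          ENNReal.tsum_le_tsum fun s => mul_le_mul_right (hsup s) _
      _ = (∑' s, markovDist step x0 t s * g s) + (∑' s, markovDist step x0 t s) * δ := by
          simp [mul_add, ENNReal.tsum_add, ENNReal.tsum_mul_right]
      _ ≤ (g x0 + t * δ) + 1 * δ :=
          add_le_add ih (mul_le_mul_left (markov_mass_le hm x0 t) _)
      _ = g x0 + (t + 1 : ℕ) * δ := by push_cast; ring

namespace CliqueAux

noncomputable def pk (alpha x : ℝ) (k : ℕ) : ℝ := (x ^ k / (k.factorial : ℝ)) ^ alpha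

noncomputable def Sg (alpha x : ℝ) (M : ℕ) : ℝ := ∑ k ∈ Finset.range M, pk alpha x k

noncomputable def dd (alpha x : ℝ) (M : ℕ) (k : ℕ) : ℝ :=
  if k < M then (Sg alpha x M)⁻¹ * pk alpha x k else 0

noncomputable def G (alpha x : ℝ) (M I : ℕ) : ℝ :=
  1 - ∑ k ∈ Finset.range I, dd alpha x M k

variable {alpha x : ℝ} {M : ℕ}

lemma pk_pos (hx : 0 < x) (k : ℕ) : 0 < pk alpha x k :=
  Real.rpow_pos_of_pos (by positivity) _

lemma pk_zero : pk alpha x 0 = 1 := by simp [pk]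

lemma pk_succ (hx : 0 < x) (k : ℕ) (hα : 0 ≤ alpha) :
    pk alpha x (k + 1) = pk alpha x k * (x / (k + 1 : ℕ)) ^ alpha := by
  rw [pk, pk, ← Real.mul_rpow (by positivity) (by positivity)]
  congr 1
  rw [Nat.factorial_succ, pow_succ]
  push_cast
  field_simp

lemma Sg_pos (hx : 0 < x) (hM : 0 < M) : 0 < Sg alpha x M :=
  Finset.sum_pos (fun k _ => pk_pos hx k) (by simpa using Finset.nonempty_range_iff.2 hM.ne')

lemma dd_nonneg (hx : 0 < x) (hM : 0 < M) (k : ℕ) : 0 ≤ dd alpha x M k := by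
  unfold dd
  split
  · exact mul_nonneg (inv_nonneg.2 (Sg_pos hx hM).le) (pk_pos hx k).le
  · exact le_refl 0

lemma sum_dd_le_one (hx : 0 < x) (hM : 0 < M) (I : ℕ) :
    ∑ k ∈ Finset.range I, dd alpha x M k ≤ 1 := by
  have hfull : ∑ k ∈ Finset.range M, dd alpha x M k = 1 := by
    have : ∀ k ∈ Finset.range M, dd alpha x M k = (Sg alpha x M)⁻¹ * pk alpha x k := by
      intro k hk; simp [dd, Finset.mem_range.1 hk]
    rw [Finset.sum_congr rfl this, ← Finset.mul_sum]
    exact inv_mul_cancel₀ (Sg_pos hx hM).ne'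
  rcases le_total I M with h | h
  · calc ∑ k ∈ Finset.range I, dd alpha x M k
        ≤ ∑ k ∈ Finset.range M, dd alpha x M k :=
          Finset.sum_le_sum_of_subset_of_nonneg (Finset.range_subset_range.2 h)
            (fun k _ _ => dd_nonneg hx hM k)
      _ = 1 := hfull
  · rw [← Finset.sum_subset (Finset.range_subset_range.2 h)
      (fun k _ hk => by simp [dd, Nat.le_of_lt_succ, not_lt.1 (by simpa using hk)])]
    exact hfull.le

lemma G_zero : G alpha x M 0 = 1 := by simp [G]

lemma G_nonneg (hx : 0 < x) (hM : 0 < M) (I : ℕ) : 0 ≤ G alpha x M I :=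
  sub_nonneg.2 (sum_dd_le_one hx hM I)

lemma G_le_one (hx : 0 < x) (hM : 0 < M) (I : ℕ) : G alpha x M I ≤ 1 := by
  have : 0 ≤ ∑ k ∈ Finset.range I, dd alpha x M k :=
    Finset.sum_nonneg fun k _ => dd_nonneg hx hM k
  simp [G]; linarith

lemma G_succ (I : ℕ) : G alpha x M (I + 1) = G alpha x M I - dd alpha x M I := by
  simp [G, Finset.sum_range_succ]; ring


lemma key_real {n : ℕ} {lam : ℝ} (hl : 0 < lam) (ha : 0 < alpha) (hx : 0 < x)
    (hxa : lam * x ^ alpha = 2 / n) (hM : M = n / 2) (hMpos : 0 < M)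
    {s : ℕ} (hs1 : 1 ≤ s) (hsn : s ≤ n) :
    ((s : ℝ) / (lam * (s:ℝ) ^ (1+alpha) * ((n:ℝ) - s) + s)) * dd alpha x M (s-1) ≤
      (lam * (s:ℝ) ^ (1+alpha) * ((n:ℝ) - s) / (lam * (s:ℝ) ^ (1+alpha) * ((n:ℝ) - s) + s))
        * dd alpha x M s
      + (Sg alpha x M)⁻¹ * pk alpha x (M-1) := by
  have hn1 : 1 ≤ n := le_trans hs1 hsn
  have hnR : (0:ℝ) < n := by exact_mod_cast hn1
  have hsR : (0:ℝ) < s := by exact_mod_cast hs1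
  have hns : (0:ℝ) ≤ (n:ℝ) - s := by
    have : (s:ℝ) ≤ n := by exact_mod_cast hsn
    linarith
  set b : ℝ := lam * (s:ℝ) ^ (1+alpha) * ((n:ℝ) - s) with hb
  have hb0 : 0 ≤ b := by
    have : (0:ℝ) ≤ (s:ℝ) ^ (1+alpha) := Real.rpow_nonneg hsR.le _
    positivity
  have hbs : 0 < b + s := by linarith
  have hβ : 0 < (Sg alpha x M)⁻¹ := inv_pos.2 (Sg_pos hx hMpos)
  have hδ : 0 ≤ (Sg alpha x M)⁻¹ * pk alpha x (M-1) :=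
    mul_nonneg hβ.le (pk_pos hx _).le
  rcases lt_or_ge s M with hsM | hMs
  · -- biased regime: q * dd (s-1) ≤ p * dd s
    have hs1M : s - 1 < M := lt_of_le_of_lt (Nat.pred_le s) hsM
    have hdds : dd alpha x M s = (Sg alpha x M)⁻¹ * pk alpha x s := by simp [dd, hsM]
    have hdds1 : dd alpha x M (s-1) = (Sg alpha x M)⁻¹ * pk alpha x (s-1) := by
      simp [dd, hs1M]
    have hpksucc : pk alpha x s = pk alpha x (s-1) * (x / (s:ℝ)) ^ alpha := by
      have h := pk_succ (alpha := alpha) hx (s-1) ha.le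
      have hs' : s - 1 + 1 = s := by omega
      rwa [hs'] at h
    have e1 : (s:ℝ) ^ (1+alpha) = s * (s:ℝ) ^ alpha := by
      rw [Real.rpow_add hsR, Real.rpow_one]
    have e2 : (x / (s:ℝ)) ^ alpha = x ^ alpha / (s:ℝ) ^ alpha :=
      Real.div_rpow hx.le hsR.le alpha
    have hsa : (0:ℝ) < (s:ℝ) ^ alpha := Real.rpow_pos_of_pos hsR _
    have h2s : 2 * s ≤ n := by omega
    have hns2 : (n:ℝ) ≤ 2 * ((n:ℝ) - s) := by
      have : (2:ℝ) * s ≤ n := by exact_mod_cast h2s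
      linarith
    have hfac : (1:ℝ) ≤ lam * x ^ alpha * ((n:ℝ) - s) := by
      rw [hxa, div_mul_eq_mul_div, le_div_iff₀ hnR]
      linarith
    have hcore : (s:ℝ) * pk alpha x (s-1) ≤ b * pk alpha x s := by
      have e3 : b * pk alpha x s =
          (s:ℝ) * pk alpha x (s-1) * (lam * x ^ alpha * ((n:ℝ) - s)) := by
        rw [hpksucc, hb, e1, e2]
        field_simp
      rw [e3]
      exact le_mul_of_one_le_right (mul_nonneg hsR.le (pk_pos hx _).le) hfac
    have h2 : (s:ℝ) / (b + s) * ((Sg alpha x M)⁻¹ * pk alpha x (s-1)) ≤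
        b / (b + s) * ((Sg alpha x M)⁻¹ * pk alpha x s) := by
      have h3 := mul_le_mul_of_nonneg_right hcore (mul_nonneg hβ.le hbs.le)
      rw [div_mul_eq_mul_div, div_mul_eq_mul_div, div_le_div_iff₀ hbs hbs]
      linear_combination h3
    rw [hdds, hdds1]
    exact le_trans h2 (le_add_of_nonneg_right hδ)
  · -- flat regime
    have hdds : dd alpha x M s = 0 := by simp [dd, not_lt.2 hMs]
    rcases eq_or_lt_of_le hMs with hMe | hMlt
    · -- s = M
      subst hMe
      have hlt : M - 1 < M := by omega
      have hdds1 : dd alpha x M (M-1) = (Sg alpha x M)⁻¹ * pk alpha x (M-1) := by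
        simp [dd, hlt]
      have hq1 : (M:ℝ) / (b + M) ≤ 1 := by
        rw [div_le_one hbs]; linarith
      rw [hdds, hdds1, mul_zero, zero_add]
      calc (M:ℝ) / (b + M) * ((Sg alpha x M)⁻¹ * pk alpha x (M-1))
          ≤ 1 * ((Sg alpha x M)⁻¹ * pk alpha x (M-1)) :=
            mul_le_mul_of_nonneg_right hq1 hδ
        _ = (Sg alpha x M)⁻¹ * pk alpha x (M-1) := one_mul _
    · -- s > M
      have hdds1 : dd alpha x M (s-1) = 0 := by
        have h4 : ¬ (s - 1 < M) := by omega
        simp [dd, h4]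
      rw [hdds, hdds1, mul_zero, mul_zero, zero_add]
      exact hδ

lemma G_combine {n : ℕ} {lam : ℝ} (hl : 0 < lam) (ha : 0 < alpha) (hx : 0 < x)
    (hxa : lam * x ^ alpha = 2 / n) (hM : M = n / 2) (hMpos : 0 < M)
    {s : ℕ} (hs1 : 1 ≤ s) (hsn : s ≤ n) :
    (lam * (s:ℝ) ^ (1+alpha) * ((n:ℝ) - s) / (lam * (s:ℝ) ^ (1+alpha) * ((n:ℝ) - s) + s))
        * G alpha x M (s+1)
      + ((s : ℝ) / (lam * (s:ℝ) ^ (1+alpha) * ((n:ℝ) - s) + s)) * G alpha x M (s-1)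
      ≤ G alpha x M s + (Sg alpha x M)⁻¹ * pk alpha x (M-1) := by
  have key := key_real hl ha hx hxa hM hMpos hs1 hsn
  have hsR : (0:ℝ) < s := by exact_mod_cast hs1
  have hns : (0:ℝ) ≤ (n:ℝ) - s := by
    have : (s:ℝ) ≤ n := by exact_mod_cast hsn
    linarith
  set b : ℝ := lam * (s:ℝ) ^ (1+alpha) * ((n:ℝ) - s) with hb
  have hb0 : 0 ≤ b := by
    have : (0:ℝ) ≤ (s:ℝ) ^ (1+alpha) := Real.rpow_nonneg hsR.le _
    positivity
  have hbs : 0 < b + s := by linarith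
  have hpq : b / (b + s) + (s:ℝ) / (b + s) = 1 := by
    rw [← add_div, div_self hbs.ne']
  have e1 : G alpha x M (s+1) = G alpha x M s - dd alpha x M s := G_succ s
  have e2 : G alpha x M (s-1) = G alpha x M s + dd alpha x M (s-1) := by
    have h := G_succ (alpha := alpha) (x := x) (M := M) (s-1)
    have hs' : s - 1 + 1 = s := by omega
    rw [hs'] at h
    linarith [h]
  rw [e1, e2]
  have expand : b / (b + s) * (G alpha x M s - dd alpha x M s)
      + (s:ℝ) / (b + s) * (G alpha x M s + dd alpha x M (s-1))
      = G alpha x M s - b / (b + s) * dd alpha x M s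
        + (s:ℝ) / (b + s) * dd alpha x M (s-1) := by
    linear_combination (G alpha x M s) * hpq
  rw [expand]
  linarith [key]

lemma sup_clique {n : ℕ} {lam : ℝ} (hl : 0 < lam) (ha : 0 < alpha) (hx : 0 < x)
    (hxa : lam * x ^ alpha = 2 / n) (hM : M = n / 2) (hMpos : 0 < M) (s : ℕ) :
    ∑' J, cliqueStep n lam alpha s J * ENNReal.ofReal (G alpha x M J) ≤
      ENNReal.ofReal (G alpha x M s)
        + ENNReal.ofReal ((Sg alpha x M)⁻¹ * pk alpha x (M-1)) := by
  have hδ : 0 ≤ (Sg alpha x M)⁻¹ * pk alpha x (M-1) :=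
    mul_nonneg (inv_nonneg.2 (Sg_pos hx hMpos).le) (pk_pos hx _).le
  by_cases habs : s = 0 ∨ n < s
  · have hstep : cliqueStep n lam alpha s = fun J => if J = s then 1 else 0 := by
      rw [cliqueStep, if_pos habs]
    rw [hstep]
    rw [tsum_eq_single s (by intro b hb; simp [hb])]
    simp only [if_true, eq_self_iff_true, one_mul]
    exact le_add_right le_rfl
  · push_neg at habs
    obtain ⟨hs0, hsn⟩ := habs
    have hs1 : 1 ≤ s := Nat.one_le_iff_ne_zero.2 hs0
    have hsR : (0:ℝ) < s := by exact_mod_cast hs1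
    have hns : (0:ℝ) ≤ (n:ℝ) - s := by
      have : (s:ℝ) ≤ n := by exact_mod_cast hsn
      linarith
    set b : ℝ := lam * (s:ℝ) ^ (1+alpha) * ((n:ℝ) - s) with hb
    have hb0 : 0 ≤ b := by
      have : (0:ℝ) ≤ (s:ℝ) ^ (1+alpha) := Real.rpow_nonneg hsR.le _
      positivity
    have hbs : 0 < b + s := by linarith
    have hp0 : 0 ≤ b / (b + s) := by positivity
    have hq0 : 0 ≤ (s:ℝ) / (b + s) := by positivity
    have hne : ¬(s = 0 ∨ n < s) := by push_neg; exact ⟨hs0, hsn⟩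
    have hstep : ∀ J, cliqueStep n lam alpha s J =
        if J = s + 1 then ENNReal.ofReal (b / (b + s))
        else if J = s - 1 then ENNReal.ofReal ((s:ℝ) / (b + s)) else 0 := by
      intro J
      rw [cliqueStep, if_neg hne]
    have hne2 : s + 1 ≠ s - 1 := by omega
    have hsum : ∑' J, cliqueStep n lam alpha s J * ENNReal.ofReal (G alpha x M J)
        = ENNReal.ofReal (b / (b + s)) * ENNReal.ofReal (G alpha x M (s+1))
          + ENNReal.ofReal ((s:ℝ) / (b + s)) * ENNReal.ofReal (G alpha x M (s-1)) := by
      rw [tsum_eq_sum (s := ({s+1, s-1} : Finset ℕ)) ?_]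
      · rw [Finset.sum_pair hne2]
        simp [hstep, hne2]
      · intro J hJ
        simp only [Finset.mem_insert, Finset.mem_singleton, not_or] at hJ
        rw [hstep, if_neg hJ.1, if_neg hJ.2, zero_mul]
    rw [hsum]
    have hG1 : 0 ≤ G alpha x M (s+1) := G_nonneg hx hMpos _
    have hG2 : 0 ≤ G alpha x M (s-1) := G_nonneg hx hMpos _
    rw [← ENNReal.ofReal_mul hp0, ← ENNReal.ofReal_mul hq0,
      ← ENNReal.ofReal_add (mul_nonneg hp0 hG1) (mul_nonneg hq0 hG2)]
    calc ENNReal.ofReal (b / (b + s) * G alpha x M (s+1)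
            + (s:ℝ) / (b + s) * G alpha x M (s-1))
        ≤ ENNReal.ofReal (G alpha x M s + (Sg alpha x M)⁻¹ * pk alpha x (M-1)) :=
          ENNReal.ofReal_le_ofReal (G_combine hl ha hx hxa hM hMpos hs1 hsn)
      _ ≤ _ := ENNReal.ofReal_add_le

lemma mass_clique (n : ℕ) {lam : ℝ} (hl : 0 < lam) (alpha : ℝ) (s : ℕ) :
    ∑' J, cliqueStep n lam alpha s J ≤ 1 := by
  by_cases habs : s = 0 ∨ n < s
  · have hstep : cliqueStep n lam alpha s = fun J => if J = s then 1 else 0 := by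
      rw [cliqueStep, if_pos habs]
    rw [hstep, tsum_eq_single s (by intro b hb; simp [hb])]
    simp
  · push_neg at habs
    obtain ⟨hs0, hsn⟩ := habs
    have hs1 : 1 ≤ s := Nat.one_le_iff_ne_zero.2 hs0
    have hsR : (0:ℝ) < s := by exact_mod_cast hs1
    have hns : (0:ℝ) ≤ (n:ℝ) - s := by
      have : (s:ℝ) ≤ n := by exact_mod_cast hsn
      linarith
    set b : ℝ := lam * (s:ℝ) ^ (1+alpha) * ((n:ℝ) - s) with hb
    have hb0 : 0 ≤ b := by
      have : (0:ℝ) ≤ (s:ℝ) ^ (1+alpha) := Real.rpow_nonneg hsR.le _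
      positivity
    have hbs : 0 < b + s := by linarith
    have hp0 : 0 ≤ b / (b + s) := by positivity
    have hne : ¬(s = 0 ∨ n < s) := by push_neg; exact ⟨hs0, hsn⟩
    have hstep : ∀ J, cliqueStep n lam alpha s J =
        if J = s + 1 then ENNReal.ofReal (b / (b + s))
        else if J = s - 1 then ENNReal.ofReal ((s:ℝ) / (b + s)) else 0 := by
      intro J
      rw [cliqueStep, if_neg hne]
    have hne2 : s + 1 ≠ s - 1 := by omega
    have hsum : ∑' J, cliqueStep n lam alpha s J
        = ENNReal.ofReal (b / (b + s)) + ENNReal.ofReal ((s:ℝ) / (b + s)) := by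
      rw [tsum_eq_sum (s := ({s+1, s-1} : Finset ℕ)) ?_]
      · rw [Finset.sum_pair hne2]
        simp [hstep, hne2]
      · intro J hJ
        simp only [Finset.mem_insert, Finset.mem_singleton, not_or] at hJ
        rw [hstep, if_neg hJ.1, if_neg hJ.2]
    rw [hsum, ← ENNReal.ofReal_add hp0 (by positivity),
      ← add_div, div_self hbs.ne', ENNReal.ofReal_one]


lemma pkm_bound {alpha x : ℝ} (ha : 0 < alpha) (hx : 0 < x) {m : ℕ} (hm : 1 ≤ m)
    (hkey : Real.exp 1 * x ≤ (m:ℝ) * ((16:ℝ) ^ ((-1:ℝ)/alpha) / 2)) :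
    pk alpha x m ≤ (1/16 : ℝ) ^ m := by
  set c : ℝ := (16:ℝ) ^ ((-1:ℝ)/alpha) with hc
  have hc0 : 0 < c := Real.rpow_pos_of_pos (by norm_num) _
  have hmR : (0:ℝ) < m := by exact_mod_cast hm
  have hfacpos : (0:ℝ) < (m.factorial : ℝ) := by exact_mod_cast m.factorial_pos
  have hexpm : Real.exp 1 ^ m = Real.exp m := by
    rw [← Real.exp_one_rpow (m:ℝ), Real.rpow_natCast]
  have h1 : (m:ℝ)^m ≤ Real.exp m * m.factorial := by
    have := Real.pow_div_factorial_le_exp (x := (m:ℝ)) hmR.le m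
    rw [div_le_iff₀ hfacpos] at this
    linarith
  have fact2 : x ^ m / (m.factorial : ℝ) ≤ (Real.exp 1 * x / m) ^ m := by
    rw [div_pow, mul_pow, hexpm, div_le_div_iff₀ hfacpos (by positivity)]
    have hxm : (0:ℝ) ≤ x ^ m := by positivity
    nlinarith [h1, hxm, hfacpos]
  have fact3 : Real.exp 1 * x / m ≤ c / 2 := by
    rw [div_le_iff₀ hmR] at *
    calc Real.exp 1 * x ≤ (m:ℝ) * (c/2) := hkey
      _ = c / 2 * m := by ring
  have fact4 : (Real.exp 1 * x / m) ^ m ≤ (c/2) ^ m :=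
    pow_le_pow_left₀ (by positivity) fact3 m
  have fact5 : pk alpha x m ≤ ((c/2) ^ m) ^ alpha :=
    Real.rpow_le_rpow (by positivity) (fact2.trans fact4) ha.le
  have hc2 : (0:ℝ) ≤ c/2 := by positivity
  have fact6 : ((c/2) ^ m) ^ alpha = ((c/2) ^ alpha) ^ m := by
    rw [← Real.rpow_natCast (c/2) m, ← Real.rpow_mul hc2, mul_comm,
      Real.rpow_mul hc2, Real.rpow_natCast]
  have fact7 : (c/2) ^ alpha ≤ 1/16 := by
    have e1 : (c/2) ^ alpha = c ^ alpha / (2:ℝ) ^ alpha := Real.div_rpow hc0.le (by norm_num) _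
    have e2 : c ^ alpha = 1/16 := by
      rw [hc, ← Real.rpow_mul (by norm_num : (0:ℝ) ≤ 16), div_mul_cancel₀ _ ha.ne',
        Real.rpow_neg_one]
      norm_num
    have e3 : (1:ℝ) ≤ (2:ℝ) ^ alpha := by
      rw [show (1:ℝ) = (2:ℝ) ^ (0:ℝ) by simp]
      exact Real.rpow_le_rpow_of_exponent_le one_le_two ha.le
    rw [e1, e2]
    exact div_le_self (by norm_num) e3
  calc pk alpha x m ≤ ((c/2) ^ alpha) ^ m := fact6 ▸ fact5
    _ ≤ (1/16 : ℝ) ^ m := pow_le_pow_left₀ (Real.rpow_nonneg hc2 _) fact7 m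

lemma Sg_bound {alpha x : ℝ} (ha : 0 < alpha) (hx : 0 < x) (M : ℕ) :
    Sg alpha x M ≤ M * Real.exp (x * alpha) := by
  have hone : ∀ k ∈ Finset.range M, pk alpha x k ≤ Real.exp (x * alpha) := by
    intro k _
    rw [Real.exp_mul]
    exact Real.rpow_le_rpow (by positivity) (Real.pow_div_factorial_le_exp (x := x) hx.le k) ha.le
  calc Sg alpha x M ≤ (Finset.range M).card • Real.exp (x * alpha) :=
        Finset.sum_le_card_nsmul _ _ _ hone
    _ = M * Real.exp (x * alpha) := by simp [nsmul_eq_mul]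

lemma pow_big : ∀ k : ℕ, 16 ≤ k → 2048 * k ≤ 2 ^ k := by
  intro k hk
  induction k, hk using Nat.le_induction with
  | base => norm_num
  | succ k hk ih =>
    have h1 : 16 ≤ k := hk
    have h2 : 2048 ≤ 2048 * k := by omega
    have h3 : 2 ^ (k+1) = 2 ^ k + 2 ^ k := by rw [pow_succ]; ring
    omega

lemma per_n (n : ℕ) {lam alpha x : ℝ} (hl : 0 < lam) (ha : 0 < alpha) (hx : 0 < x)
    (hxa : lam * x ^ alpha = 2 / n) (hn : 64 ≤ n)
    (hkey : Real.exp 1 * x ≤ ((n/2 - 1 : ℕ) : ℝ) * ((16:ℝ) ^ ((-1:ℝ)/alpha) / 2))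
    (hax : alpha * x ≤ (1/4 : ℝ) * n)
    (hbig : (256:ℝ) * n ≤ (2:ℝ) ^ ((1/4 : ℝ) * n))
    {x0 : ℕ} (hx0 : 1 ≤ x0) :
    ENNReal.ofReal ((2:ℝ) ^ ((1/4 : ℝ) * n)) ≤ cliqueET n lam alpha x0 := by
  set M : ℕ := n / 2 with hM
  set m : ℕ := M - 1 with hm
  have hMpos : 0 < M := by omega
  have hm1 : 1 ≤ m := by omega
  have hSg : 0 < Sg alpha x M := Sg_pos hx hMpos
  set β : ℝ := (Sg alpha x M)⁻¹ with hβdef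
  have hβ : 0 < β := inv_pos.2 hSg
  have hSg1 : 1 ≤ Sg alpha x M := by
    have h0 : (0:ℕ) ∈ Finset.range M := Finset.mem_range.2 hMpos
    have h1 : pk alpha x 0 ≤ ∑ k ∈ Finset.range M, pk alpha x k :=
      Finset.single_le_sum (f := fun k => pk alpha x k)
        (fun k _ => (pk_pos hx k).le) h0
    rw [pk_zero] at h1
    exact h1
  have hβ1 : β ≤ 1 := by
    rw [hβdef]
    exact inv_le_one_of_one_le₀ hSg1
  have hpkm : pk alpha x m ≤ (1/16:ℝ)^m := pkm_bound ha hx hm1 hkey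
  set δr : ℝ := β * pk alpha x m with hδr
  have hδr0 : 0 ≤ δr := mul_nonneg hβ.le (pk_pos hx _).le
  set N : ℕ := 4 ^ m with hN
  -- expected value bound
  have hzero : ∀ t, cliqueDist n lam alpha x0 t 0 ≤
      ENNReal.ofReal (G alpha x M x0) + t * ENNReal.ofReal δr := by
    intro t
    have hexp := markov_exp_le (g := fun I => ENNReal.ofReal (G alpha x M I))
      (δ := ENNReal.ofReal δr) (mass_clique n hl alpha)
      (fun s => sup_clique hl ha hx hxa hM hMpos s) x0 t
    have h1 : cliqueDist n lam alpha x0 t 0 * ENNReal.ofReal (G alpha x M 0) ≤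
        ∑' s, markovDist (cliqueStep n lam alpha) x0 t s * ENNReal.ofReal (G alpha x M s) :=
      ENNReal.le_tsum 0
    rw [G_zero, ENNReal.ofReal_one, mul_one] at h1
    exact le_trans h1 hexp
  -- per-step bound for t < N
  have hGx0 : G alpha x M x0 ≤ 1 - β := by
    have h0 : (0:ℕ) ∈ Finset.range x0 := Finset.mem_range.2 hx0
    have h1 : dd alpha x M 0 ≤ ∑ k ∈ Finset.range x0, dd alpha x M k :=
      Finset.single_le_sum (f := fun k => dd alpha x M k)
        (fun k _ => dd_nonneg hx hMpos k) h0
    have h2 : dd alpha x M 0 = β := by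
      simp [dd, hMpos, pk_zero, hβdef]
    rw [h2] at h1
    simp only [G]
    linarith
  have hNδ : (N:ℝ) * δr ≤ β / 2 := by
    have e0 : (N:ℝ) = (4:ℝ)^m := by rw [hN]; push_cast; ring
    have e1 : (4:ℝ)^m * (1/16:ℝ)^m = (1/4:ℝ)^m := by
      rw [← mul_pow]; norm_num
    have e2 : ((1:ℝ)/4)^m ≤ (1/4:ℝ)^1 :=
      pow_le_pow_of_le_one (by norm_num) (by norm_num) hm1
    have e3 : (4:ℝ)^m * pk alpha x m ≤ (1/4:ℝ)^m := by
      calc (4:ℝ)^m * pk alpha x m ≤ (4:ℝ)^m * (1/16:ℝ)^m :=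
            mul_le_mul_of_nonneg_left hpkm (by positivity)
        _ = (1/4:ℝ)^m := e1
    have e4 : (4:ℝ)^m * pk alpha x m ≤ 1/2 := by
      refine e3.trans (e2.trans ?_)
      norm_num
    rw [e0, hδr]
    calc (4:ℝ)^m * (β * pk alpha x m) = β * ((4:ℝ)^m * pk alpha x m) := by ring
      _ ≤ β * (1/2) := mul_le_mul_of_nonneg_left e4 hβ.le
      _ = β / 2 := by ring
  have hterm : ∀ t < N, ENNReal.ofReal (β/2) ≤ 1 - cliqueDist n lam alpha x0 t 0 := by
    intro t ht
    have hb1 : cliqueDist n lam alpha x0 t 0 ≤ ENNReal.ofReal (1 - β/2) := by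
      refine le_trans (hzero t) ?_
      have e1 : (t:ℝ≥0∞) * ENNReal.ofReal δr ≤ ENNReal.ofReal ((N:ℝ) * δr) := by
        calc (t:ℝ≥0∞) * ENNReal.ofReal δr ≤ (N:ℝ≥0∞) * ENNReal.ofReal δr :=
              mul_le_mul_left (by exact_mod_cast ht.le) _
          _ = ENNReal.ofReal ((N:ℝ) * δr) := by
              rw [← ENNReal.ofReal_natCast N, ← ENNReal.ofReal_mul (by positivity)]
      calc ENNReal.ofReal (G alpha x M x0) + (t:ℝ≥0∞) * ENNReal.ofReal δr
          ≤ ENNReal.ofReal (1 - β) + ENNReal.ofReal ((N:ℝ) * δr) :=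
            add_le_add (ENNReal.ofReal_le_ofReal hGx0) e1
        _ ≤ ENNReal.ofReal (1 - β) + ENNReal.ofReal (β/2) :=
            add_le_add_right (ENNReal.ofReal_le_ofReal hNδ) _
        _ = ENNReal.ofReal ((1 - β) + β/2) := by
            rw [ENNReal.ofReal_add (by linarith) (by positivity)]
        _ = ENNReal.ofReal (1 - β/2) := by ring_nf
    have hofe : ENNReal.ofReal (β/2) + ENNReal.ofReal (1 - β/2) = 1 := by
      rw [← ENNReal.ofReal_add (by positivity) (by linarith), ← ENNReal.ofReal_one]
      norm_num
    have e5 : ENNReal.ofReal (β/2) = 1 - ENNReal.ofReal (1 - β/2) := by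
      rw [← hofe, ENNReal.add_sub_cancel_right ENNReal.ofReal_ne_top]
    rw [e5]
    exact tsub_le_tsub_left hb1 1
  -- sum over range N
  have hsumN : (N:ℝ≥0∞) * ENNReal.ofReal (β/2) ≤ cliqueET n lam alpha x0 := by
    calc (N:ℝ≥0∞) * ENNReal.ofReal (β/2)
        = ∑ _t ∈ Finset.range N, ENNReal.ofReal (β/2) := by
          simp [Finset.sum_const, nsmul_eq_mul]
      _ ≤ ∑ t ∈ Finset.range N, (1 - cliqueDist n lam alpha x0 t 0) :=
          Finset.sum_le_sum fun t ht => hterm t (Finset.mem_range.1 ht)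
      _ ≤ cliqueET n lam alpha x0 := by
          rw [cliqueET]
          exact ENNReal.sum_le_tsum _
  refine le_trans ?_ hsumN
  rw [← ENNReal.ofReal_natCast N, ← ENNReal.ofReal_mul (by positivity)]
  apply ENNReal.ofReal_le_ofReal
  -- final numeric inequality
  have hnR : (0:ℝ) < n := by positivity
  have s1 : Sg alpha x M ≤ (n:ℝ) * (2:ℝ)^((1/2:ℝ)*n) := by
    have e1 : Real.exp (x * alpha) ≤ (2:ℝ)^((1/2:ℝ)*n) := by
      rw [Real.rpow_def_of_pos (by norm_num : (0:ℝ) < 2)]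
      apply Real.exp_le_exp.2
      have hl2 : (0.6931471803 : ℝ) < Real.log 2 := Real.log_two_gt_d9
      nlinarith [hax, hnR]
    have e2 : (M:ℝ) ≤ n := by exact_mod_cast Nat.div_le_self n 2
    calc Sg alpha x M ≤ (M:ℝ) * Real.exp (x * alpha) := Sg_bound ha hx M
      _ ≤ (n:ℝ) * (2:ℝ)^((1/2:ℝ)*n) := by
          apply mul_le_mul e2 e1 (Real.exp_pos _).le hnR.le
  have s2 : (2:ℝ)^((1/4:ℝ)*n) * (2 * Sg alpha x M) ≤ (N:ℝ) := by
    have q1 : (0:ℝ) < (2:ℝ)^((1/4:ℝ)*n) := Real.rpow_pos_of_pos (by norm_num) _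
    have t1 : (2:ℝ)^((1/4:ℝ)*n) * (2 * Sg alpha x M)
        ≤ (2:ℝ)^((1/4:ℝ)*n) * (2 * ((n:ℝ) * (2:ℝ)^((1/2:ℝ)*n))) := by
      apply mul_le_mul_of_nonneg_left _ q1.le
      nlinarith [s1]
    have t2 : (2:ℝ)^((1/4:ℝ)*n) * (2 * ((n:ℝ) * (2:ℝ)^((1/2:ℝ)*n)))
        = (2 * n) * ((2:ℝ)^((1/4:ℝ)*n + (1/2:ℝ)*n)) := by
      rw [Real.rpow_add (by norm_num : (0:ℝ) < 2)]
      ring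
    have t3 : (2:ℝ) * n ≤ (2:ℝ)^((1/4:ℝ)*n) / 128 := by
      nlinarith [hbig]
    have t4 : (2 * (n:ℝ)) * ((2:ℝ)^((1/4:ℝ)*n + (1/2:ℝ)*n))
        ≤ ((2:ℝ)^((1/4:ℝ)*n) / 128) * ((2:ℝ)^((1/4:ℝ)*n + (1/2:ℝ)*n)) := by
      apply mul_le_mul_of_nonneg_right t3 (Real.rpow_pos_of_pos (by norm_num) _).le
    have t5 : ((2:ℝ)^((1/4:ℝ)*n) / 128) * ((2:ℝ)^((1/4:ℝ)*n + (1/2:ℝ)*n))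
        = (2:ℝ)^((n:ℝ)) / 128 := by
      rw [div_mul_eq_mul_div, ← Real.rpow_add (by norm_num : (0:ℝ) < 2),
        show (1/4*(n:ℝ) + (1/4*(n:ℝ) + 1/2*(n:ℝ))) = (n:ℝ) by ring]
    have t6 : (2:ℝ)^((n:ℝ)) / 128 ≤ (N:ℝ) := by
      have e7 : (2:ℝ)^((n:ℝ)) = ((2^n : ℕ) : ℝ) := by
        rw [Real.rpow_natCast]; push_cast; ring
      have e8 : (2:ℕ)^n ≤ 128 * 4^m := by
        have e9 : (4:ℕ)^m = 2^(2*m) := by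
          rw [pow_mul]; norm_num
        have e10 : (128:ℕ) = 2^7 := by norm_num
        rw [e9, e10, ← pow_add]
        exact Nat.pow_le_pow_right (by norm_num) (by omega)
      rw [e7, div_le_iff₀ (by norm_num : (0:ℝ) < 128), hN]
      push_cast
      calc ((2:ℝ))^n ≤ 128 * 4^m := by exact_mod_cast e8
        _ = (4:ℝ)^m * 128 := by ring
    calc (2:ℝ)^((1/4:ℝ)*n) * (2 * Sg alpha x M)
        ≤ (2 * n) * ((2:ℝ)^((1/4:ℝ)*n + (1/2:ℝ)*n)) := t2 ▸ t1
      _ ≤ (2:ℝ)^((n:ℝ)) / 128 := t5 ▸ t4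
      _ ≤ (N:ℝ) := t6
  have hfin : (2:ℝ)^((1/4:ℝ)*n) ≤ (N:ℝ) * (β/2) := by
    rw [hβdef]
    rw [show (N:ℝ) * ((Sg alpha x M)⁻¹/2) = (N:ℝ) / (2 * Sg alpha x M) by
      field_simp]
    rw [le_div_iff₀ (by positivity)]
    exact s2
  exact hfin

end CliqueAux


/-- For super-linear scaling with (λn/2)^{-1/α} = o(n), started at the
equilibrium ⌈(λn/2)^{-1/α}⌉, the expected survival time is at least 2^{cn}. -/
theorem clique_superlinear_survival_from_equilibrium (alpha : ℝ) (ha : 0 < alpha)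
    (lam : ℕ → ℝ) (hpos : ∀ n, 0 < lam n)
    (hlittle : (fun n : ℕ => (lam n * n / 2) ^ (-1 / alpha)) =o[atTop]
      (fun n : ℕ => (n : ℝ))) :
    ∃ c : ℝ, 0 < c ∧ ∀ᶠ n : ℕ in atTop,
      ENNReal.ofReal ((2 : ℝ) ^ (c * n)) ≤
        cliqueET n (lam n) alpha ⌈(lam n * n / 2) ^ (-1 / alpha)⌉₊ := by
  refine ⟨1/4, by norm_num, ?_⟩
  set c0 : ℝ := (16:ℝ) ^ ((-1:ℝ)/alpha) with hc0
  have hc0pos : 0 < c0 := Real.rpow_pos_of_pos (by norm_num) _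
  have hepos : 0 < Real.exp 1 := Real.exp_pos 1
  set ε : ℝ := min (c0 / (16 * Real.exp 1)) (1/(4*alpha)) with hε
  have hεpos : 0 < ε := lt_min (by positivity) (by positivity)
  filter_upwards [hlittle.def hεpos, eventually_ge_atTop 64] with n h1 h2
  have hnR : (0:ℝ) < n := by
    have : (0:ℕ) < n := by omega
    exact_mod_cast this
  have hbase : 0 < lam n * n / 2 := by
    have := hpos n
    positivity
  set x : ℝ := (lam n * n / 2) ^ (-1 / alpha) with hxdef
  have hx : 0 < x := Real.rpow_pos_of_pos hbase _
  have hxε : x ≤ ε * n := by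
    have hax : |x| ≤ ε * |(n:ℝ)| := by
      simpa [Real.norm_eq_abs] using h1
    rwa [abs_of_pos hx, abs_of_pos hnR] at hax
  have hxa : lam n * x ^ alpha = 2 / n := by
    have e1 : x ^ alpha = (lam n * n / 2) ^ ((-1/alpha) * alpha) := by
      rw [hxdef, ← Real.rpow_mul hbase.le]
    have e2 : (-1/alpha) * alpha = -1 := by field_simp
    have hl0 : lam n ≠ 0 := (hpos n).ne'
    rw [e1, e2, Real.rpow_neg_one]
    field_simp
  have hm4 : (n:ℝ) ≤ 4 * ((n/2-1 : ℕ):ℝ) := by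
    have h3 : n ≤ 4 * (n/2-1) := by omega
    exact_mod_cast h3
  have hkey : Real.exp 1 * x ≤ ((n/2 - 1 : ℕ) : ℝ) * (c0 / 2) := by
    have e1 : Real.exp 1 * x ≤ Real.exp 1 * (ε * n) :=
      mul_le_mul_of_nonneg_left hxε hepos.le
    have e2 : ε * n ≤ (c0/(16*Real.exp 1)) * n :=
      mul_le_mul_of_nonneg_right (min_le_left _ _) hnR.le
    have e3 : Real.exp 1 * ((c0/(16*Real.exp 1)) * n) = c0 * n / 16 := by
      rw [div_mul_eq_mul_div, mul_div_assoc]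
      rw [mul_comm (16:ℝ) (Real.exp 1), ← div_div, mul_div_assoc,
        mul_comm c0 ((n:ℝ) / Real.exp 1 / 16), ← mul_assoc,
        show Real.exp 1 * ((n:ℝ) / Real.exp 1 / 16) = (n:ℝ)/16 by
          field_simp]
      ring
    have e4 : c0 * n / 16 ≤ ((n/2 - 1 : ℕ) : ℝ) * (c0 / 2) := by
      nlinarith [mul_le_mul_of_nonneg_right hm4 (by positivity : (0:ℝ) ≤ c0/2)]
    calc Real.exp 1 * x ≤ Real.exp 1 * (ε * n) := e1
      _ ≤ Real.exp 1 * ((c0/(16*Real.exp 1)) * n) :=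
          mul_le_mul_of_nonneg_left e2 hepos.le
      _ = c0 * n / 16 := e3
      _ ≤ _ := e4
  have haxle : alpha * x ≤ (1/4 : ℝ) * n := by
    have e1 : alpha * x ≤ alpha * (ε * n) := mul_le_mul_of_nonneg_left hxε ha.le
    have e2 : ε ≤ 1/(4*alpha) := min_le_right _ _
    have e3 : alpha * (ε * n) ≤ alpha * ((1/(4*alpha)) * n) := by
      apply mul_le_mul_of_nonneg_left _ ha.le
      exact mul_le_mul_of_nonneg_right e2 hnR.le
    have e4 : alpha * ((1/(4*alpha)) * n) = (1/4:ℝ) * n := by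
      field_simp
    linarith
  have hbig : (256:ℝ) * n ≤ (2:ℝ) ^ ((1/4 : ℝ) * n) := by
    set k : ℕ := n / 4 with hk
    have hk16 : 16 ≤ k := by omega
    have hp := CliqueAux.pow_big k hk16
    have e1 : (256:ℝ) * n ≤ ((2048 * k : ℕ) : ℝ) := by
      have h3 : 256 * n ≤ 2048 * k := by omega
      exact_mod_cast h3
    have e2 : ((2048 * k : ℕ) : ℝ) ≤ ((2^k : ℕ) : ℝ) := by exact_mod_cast hp
    have e3 : ((2^k : ℕ) : ℝ) = (2:ℝ) ^ ((k:ℕ):ℝ) := by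
      rw [Real.rpow_natCast]
      push_cast
      ring
    have e4 : (2:ℝ) ^ ((k:ℕ):ℝ) ≤ (2:ℝ) ^ ((1/4 : ℝ) * n) := by
      apply Real.rpow_le_rpow_of_exponent_le one_le_two
      have h4 : 4 * k ≤ n := by omega
      have h5 : (4:ℝ) * k ≤ n := by exact_mod_cast h4
      linarith
    calc (256:ℝ) * n ≤ ((2048 * k : ℕ) : ℝ) := e1
      _ ≤ ((2^k : ℕ) : ℝ) := e2
      _ = (2:ℝ) ^ ((k:ℕ):ℝ) := e3
      _ ≤ _ := e4
  have hx0 : 1 ≤ ⌈x⌉₊ := Nat.ceil_pos.2 hx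
  have := CliqueAux.per_n n (hpos n) ha hx hxa h2 hkey haxle hbig hx0
  simpa using this
end
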